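/- arXiv:2505.21823 — 6 statements merged into one kernel-verified Lean document; each statement's English description precedes it below -/
import Mathlib

section
/- Let T be a finite ordered rooted tree with n vertices, and fix real numbers α₁, α₂ with α₂ ≠ 0. Consider the branching random walk on T where the displacement from a vertex v with c(v) children to its j-th child equals α₁ - (2/α₂)(c(v) - j). Then for every integer i with 0 ≤ i ≤ n-1, the spatial location R(i) of the (i+1)-st vertex in depth-first (lexicographic) order satisfies R(i) = α₁·H(i) - (2/α₂)·W(i), where H(i) is the height (depth) of the (i+1)-st vertex and W(i) = Σ_{j=1}^{i} (c(v_j) - 1) is the Łukasiewicz path of T. -/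
noncomputable section
open Classical

/-- An ordered rooted tree, encoded as a finite set of Ulam–Harris words:
the root is `[]`, the tree is closed under taking prefixes (ancestors), the
children of a vertex `v` are `v ++ [j]` for `1 ≤ j ≤ c(v)` (closure under
taking younger→older siblings, and no child index `0`). -/
def IsOrderedTree (t : Finset (List ℕ)) : Prop :=
  [] ∈ t ∧
  (∀ v ∈ t, ∀ p : List ℕ, p <+: v → p ∈ t) ∧
  (∀ (v : List ℕ) (i j : ℕ), v ++ [i] ∈ t → 1 ≤ j → j ≤ i → v ++ [j] ∈ t) ∧
  (∀ v : List ℕ, v ++ [0] ∉ t)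

/-- The number of children of the vertex `v` in the tree `t`. -/
def childCount (t : Finset (List ℕ)) (v : List ℕ) : ℕ :=
  (t.filter (fun w => w.length = v.length + 1 ∧ v <+: w)).card

/-- The spatial location of a vertex `u` for the branching random walk in which
the displacement from a vertex `p` with `c(p)` children to its `j`-th child equals
`α₁ - (2/α₂) * (c(p) - j)`: the sum of these displacements along the ancestral
path from the root to `u`. -/
def spatialLoc (α₁ α₂ : ℝ) (t : Finset (List ℕ)) (u : List ℕ) : ℝ :=
  ∑ k ∈ Finset.range u.length,
    (α₁ - (2 / α₂) * ((childCount t (u.take k) : ℝ) - (u.getD k 0 : ℝ)))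

theorem lex_append_left (a x y : List ℕ) (h : x < y) : a ++ x < a ++ y := by
  induction a with
  | nil => exact h
  | cons b a ih => exact List.Lex.cons ih

theorem prefix_lt {p u : List ℕ} (h : p <+: u) (hne : p ≠ u) : p < u := by
  obtain ⟨s, rfl⟩ := h
  have hs : s ≠ [] := by rintro rfl; simp at hne
  induction p with
  | nil => cases s with
    | nil => simp at hs
    | cons b t => exact List.nil_lt_cons b t
  | cons b p ih =>
      exact List.Lex.cons (by simpa using ih (by simp_all))

theorem lt_elim {p u : List ℕ} (h : p < u) : p <+: u ∨ ∀ l, p ++ l < u := by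
  induction h with
  | nil => exact Or.inl (List.nil_prefix)
  | @cons a l₁ l₂ h ih =>
      rcases ih with h' | h'
      · obtain ⟨s, rfl⟩ := h'
        exact Or.inl ⟨s, rfl⟩
      · exact Or.inr fun l => List.Lex.cons (h' l)
  | @rel a₁ l₁ a₂ l₂ hr => exact Or.inr fun l => List.Lex.rel hr

theorem nil_lt {u : List ℕ} (hu : u ≠ []) : ([] : List ℕ) < u := by
  cases u with
  | nil => simp at hu
  | cons a l => exact List.nil_lt_cons a l

theorem dropLast_lt_self {x : List ℕ} (hx : x ≠ []) : x.dropLast < x := by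
  refine prefix_lt (List.dropLast_prefix x) ?_
  intro h
  have := congrArg List.length h
  rw [List.length_dropLast] at this
  cases x with
  | nil => simp at hx
  | cons a l => simp at this

theorem initseg (s : Finset ℕ) (h0 : 0 ∉ s) (hcl : ∀ i ∈ s, ∀ j, 1 ≤ j → j ≤ i → j ∈ s) :
    s = Finset.Icc 1 s.card := by
  rcases eq_or_ne s ∅ with rfl | hne
  · simp
  · have hnon : s.Nonempty := Finset.nonempty_iff_ne_empty.mpr hne
    have hM : s = Finset.Icc 1 (s.max' hnon) := by
      apply Finset.ext
      intro j
      simp only [Finset.mem_Icc]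
      constructor
      · intro hj
        refine ⟨?_, Finset.le_max' s j hj⟩
        rcases Nat.eq_zero_or_pos j with rfl | h
        · exact absurd hj h0
        · exact h
      · rintro ⟨h1, h2⟩
        exact hcl _ (s.max'_mem hnon) j h1 h2
    have : s.card = s.max' hnon := by
      conv_lhs => rw [hM]
      simp [Nat.card_Icc]
    rw [this]; exact hM

theorem child_iff {T : Finset (List ℕ)} (hT : IsOrderedTree T) (v : List ℕ) (m : ℕ) :
    v ++ [m] ∈ T ↔ 1 ≤ m ∧ m ≤ childCount T v := by
  classical
  obtain ⟨hroot, hpre, hsib, hz⟩ := hT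
  set C := T.filter (fun w => w.length = v.length + 1 ∧ v <+: w) with hC
  have hCmem : ∀ w, w ∈ C ↔ ∃ k, w = v ++ [k] ∧ w ∈ T := by
    intro w
    simp only [hC, Finset.mem_filter]
    constructor
    · rintro ⟨hw, hlen, t, rfl⟩
      have : t.length = 1 := by simpa using hlen
      obtain ⟨a, rfl⟩ := List.length_eq_one_iff.mp this
      exact ⟨a, rfl, hw⟩
    · rintro ⟨k, rfl, hw⟩
      exact ⟨hw, by simp, ⟨[k], rfl⟩⟩
  set I := C.image (fun w => w.getD v.length 0) with hI
  have hImem : ∀ k, k ∈ I ↔ v ++ [k] ∈ T := by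
    intro k
    simp only [hI, Finset.mem_image]
    constructor
    · rintro ⟨w, hw, rfl⟩
      obtain ⟨k', rfl, hw'⟩ := (hCmem w).mp hw
      simpa using hw'
    · intro hk
      refine ⟨v ++ [k], (hCmem _).mpr ⟨k, rfl, hk⟩, by simp⟩
  have hcard : I.card = C.card := by
    apply Finset.card_image_of_injOn
    intro w hw w' hw' he
    obtain ⟨k, rfl, -⟩ := (hCmem w).mp hw
    obtain ⟨k', rfl, -⟩ := (hCmem w').mp hw'
    simp at he; simp [he]
  have h0 : 0 ∉ I := fun h => hz v ((hImem 0).mp h)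
  have hcl : ∀ i ∈ I, ∀ j, 1 ≤ j → j ≤ i → j ∈ I := by
    intro i hi j h1 h2
    exact (hImem j).mpr (hsib v i j ((hImem i).mp hi) h1 h2)
  have h := initseg I h0 hcl
  have h2 : I = Finset.Icc 1 (childCount T v) := by
    rw [h, hcard]; rfl
  rw [← hImem, h2, Finset.mem_Icc]

theorem take_succ_eq (u : List ℕ) {k : ℕ} (h : k < u.length) :
    u.take (k+1) = u.take k ++ [u.getD k 0] := by
  rw [List.getD_eq_getElem _ _ h, ← List.take_concat_get h, List.concat_eq_append]

theorem anc_mem {T : Finset (List ℕ)} (hT : IsOrderedTree T) {u : List ℕ} (hu : u ∈ T)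
    (k : ℕ) : u.take k ∈ T :=
  hT.2.1 u hu _ (List.take_prefix k u)

theorem idx_bounds {T : Finset (List ℕ)} (hT : IsOrderedTree T) {u : List ℕ} (hu : u ∈ T)
    {k : ℕ} (h : k < u.length) :
    1 ≤ u.getD k 0 ∧ u.getD k 0 ≤ childCount T (u.take k) := by
  have h1 : u.take k ++ [u.getD k 0] ∈ T := by
    rw [← take_succ_eq u h]; exact anc_mem hT hu _
  exact (child_iff hT _ _).mp h1

theorem u_decomp (u : List ℕ) {k : ℕ} (h : k < u.length) :
    u = u.take k ++ (u.getD k 0 :: u.drop (k+1)) := by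
  conv_lhs => rw [← List.take_append_drop k u]
  rw [List.drop_eq_getElem_cons h, List.getD_eq_getElem _ _ h]

theorem key {T : Finset (List ℕ)} (hT : IsOrderedTree T) {u : List ℕ} (hu : u ∈ T) :
    ∑ w ∈ T.filter (fun w => w < u), ((childCount T w : ℝ) - 1)
      = ∑ k ∈ Finset.range u.length,
          ((childCount T (u.take k) : ℝ) - (u.getD k 0 : ℝ)) := by
  classical
  rcases eq_or_ne u [] with rfl | hune
  · have : T.filter (fun w => w < ([] : List ℕ)) = ∅ := by
      apply Finset.filter_false_of_mem
      intro x _ hx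
      exact List.not_lex_nil hx
    simp [this]
  set Y := T.filter (fun w => w < u) with hY
  set X := T.filter (fun x => x ≠ [] ∧ x.dropLast < u) with hX
  set D := X.filter (fun x => ¬ x < u) with hD
  set c : ℕ → ℕ := fun k => childCount T (u.take k) with hc
  set d : ℕ → ℕ := fun k => u.getD k 0 with hd
  set Sib : ℕ → Finset (List ℕ) :=
    fun k => (Finset.Ioc (d k) (c k)).image (fun m => u.take k ++ [m]) with hSib
  -- Fact 1
  have hXY : ∀ x ∈ X, x.dropLast ∈ Y := by
    intro x hx
    rw [hX, Finset.mem_filter] at hx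
    rw [hY, Finset.mem_filter]
    exact ⟨hT.2.1 x hx.1 _ (List.dropLast_prefix x), hx.2.2⟩
  have F1 : X.card = ∑ w ∈ Y, childCount T w := by
    rw [Finset.card_eq_sum_card_fiberwise hXY]
    apply Finset.sum_congr rfl
    intro w hw
    rw [hY, Finset.mem_filter] at hw
    unfold childCount
    congr 1
    apply Finset.ext
    intro x
    simp only [hX, Finset.mem_filter]
    constructor
    · rintro ⟨⟨hxT, hxne, hxlt⟩, hdx⟩
      have hx2 : w ++ [x.getLast hxne] = x := by
        rw [← hdx]; exact List.dropLast_append_getLast hxne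
      refine ⟨hxT, ?_, ?_⟩
      · rw [← hx2]; simp
      · rw [← hx2]; exact ⟨_, rfl⟩
    · rintro ⟨hxT, hlen, t, rfl⟩
      have : t.length = 1 := by simpa using hlen
      obtain ⟨a, rfl⟩ := List.length_eq_one_iff.mp this
      refine ⟨⟨hxT, by simp, ?_⟩, by simp⟩
      rw [List.dropLast_concat]
      exact hw.2
  -- Fact 2
  have hnilY : ([] : List ℕ) ∈ Y := Finset.mem_filter.mpr ⟨hT.1, nil_lt hune⟩
  have hYerase : X.filter (fun x => x < u) = Y.erase [] := by
    apply Finset.ext; intro x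
    simp only [hX, hY, Finset.mem_filter, Finset.mem_erase]
    constructor
    · rintro ⟨⟨hxT, hxne, -⟩, hxlt⟩; exact ⟨hxne, hxT, hxlt⟩
    · rintro ⟨hxne, hxT, hxlt⟩
      exact ⟨⟨hxT, hxne, lt_trans (dropLast_lt_self hxne) hxlt⟩, hxlt⟩
  have F2 : X.card + 1 = Y.card + D.card := by
    have h1 := Finset.card_filter_add_card_filter_not (s := X) (p := fun x => x < u)
    rw [hYerase] at h1
    have h2 := Finset.card_erase_add_one hnilY
    rw [hD]
    omega
  -- Fact 3
  have hSibmem : ∀ k x, x ∈ Sib k ↔ ∃ m, d k < m ∧ m ≤ c k ∧ x = u.take k ++ [m] := by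
    intro k x
    simp only [hSib, Finset.mem_image, Finset.mem_Ioc]
    constructor
    · rintro ⟨m, ⟨h1, h2⟩, rfl⟩; exact ⟨m, h1, h2, rfl⟩
    · rintro ⟨m, h1, h2, rfl⟩; exact ⟨m, ⟨h1, h2⟩, rfl⟩
  have F3 : D = insert u ((Finset.range u.length).biUnion Sib) := by
    apply Finset.ext; intro x
    simp only [Finset.mem_insert, Finset.mem_biUnion, Finset.mem_range]
    rw [hD, hX, Finset.mem_filter, Finset.mem_filter]
    constructor
    · rintro ⟨⟨hxT, hxne, hdlt⟩, hnlt⟩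
      rcases lt_elim hdlt with hpre | hall
      · set k := x.dropLast.length with hk
        have hkle : k ≤ u.length := hpre.length_le
        have htk : x.dropLast = u.take k := by
          rw [List.prefix_iff_eq_take] at hpre; exact hpre
        have hklt : k < u.length := by
          rcases lt_or_eq_of_le hkle with h | h
          · exact h
          · exfalso
            rw [htk, h, List.take_length] at hdlt
            exact lt_irrefl u hdlt
        have hxeq : x = u.take k ++ [x.getLast hxne] := by
          conv_lhs => rw [← List.dropLast_append_getLast hxne]
          rw [htk]
        set m := x.getLast hxne with hm
        have hmT : u.take k ++ [m] ∈ T := hxeq ▸ hxT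
        have hmb := (child_iff hT _ _).mp hmT
        rcases lt_trichotomy m (d k) with hlt | heq | hgt
        · exfalso; apply hnlt
          rw [hxeq]
          conv_rhs => rw [u_decomp u hklt]
          exact lex_append_left _ _ _ (List.Lex.rel hlt)
        · left
          have hxu : x = u.take (k+1) := by
            rw [hxeq, heq, take_succ_eq u hklt]
          by_contra hne2
          exact hnlt (prefix_lt (hxu ▸ List.take_prefix (k+1) u) hne2)
        · right
          exact ⟨k, hklt, (hSibmem k x).mpr ⟨m, hgt, hmb.2, hxeq⟩⟩
      · exfalso; apply hnlt
        conv_lhs => rw [← List.dropLast_append_getLast hxne]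
        exact hall _
    · rintro (rfl | ⟨k, hk, hx⟩)
      · exact ⟨⟨hu, hune, dropLast_lt_self hune⟩, lt_irrefl x⟩
      · obtain ⟨m, hm1, hm2, rfl⟩ := (hSibmem k _).mp hx
        have hd1 : 1 ≤ d k := (idx_bounds hT hu hk).1
        have hmT : u.take k ++ [m] ∈ T :=
          (child_iff hT _ _).mpr ⟨le_trans hd1 (le_of_lt hm1), hm2⟩
        have hlen : (u.take k).length = k := by
          rw [List.length_take]; omega
        refine ⟨⟨hmT, by simp, ?_⟩, ?_⟩
        · rw [List.dropLast_concat]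
          exact prefix_lt (List.take_prefix k u)
            (by intro h; have := congrArg List.length h; rw [hlen] at this; omega)
        · intro hlt
          have hul : u < u.take k ++ [m] := by
            conv_lhs => rw [u_decomp u hk]
            exact lex_append_left _ _ _ (List.Lex.rel hm1)
          exact lt_asymm hul hlt
  have hSiblen : ∀ k, k < u.length → ∀ x, x ∈ Sib k → x.length = k + 1 := by
    intro k hk x hx
    obtain ⟨m, -, -, rfl⟩ := (hSibmem k x).mp hx
    rw [List.length_append, List.length_take]
    simp; omega
  have hdisj : ∀ k ∈ Finset.range u.length, ∀ k' ∈ Finset.range u.length,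
      k ≠ k' → Disjoint (Sib k) (Sib k') := by
    intro k hk k' hk' hne
    rw [Finset.mem_range] at hk hk'
    rw [Finset.disjoint_left]
    intro x hx hx'
    have := hSiblen k hk x hx
    have := hSiblen k' hk' x hx'
    omega
  have hSibcard : ∀ k, (Sib k).card = c k - d k := by
    intro k
    rw [hSib]
    rw [Finset.card_image_of_injOn, Nat.card_Ioc]
    intro a _ b _ hab
    have := List.append_cancel_left hab
    simpa using this
  have hunot : u ∉ (Finset.range u.length).biUnion Sib := by
    intro h
    rw [Finset.mem_biUnion] at h
    obtain ⟨k, hk, hmem⟩ := h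
    rw [Finset.mem_range] at hk
    obtain ⟨m, hm1, -, heq⟩ := (hSibmem k u).mp hmem
    have hlen : (u.take k).length = k := by rw [List.length_take]; omega
    have hdm : d k = m := by
      have hdm2 : (u.take k ++ [m]).getD k 0 = m := by
        rw [List.getD_eq_getElem _ _ (by simp [hlen])]
        rw [List.getElem_append_right (by omega)]
        simp [hlen]
      show u.getD k 0 = m
      conv_lhs => rw [heq]
      exact hdm2
    omega
  have F6 : D.card = ∑ k ∈ Finset.range u.length, (c k - d k) + 1 := by
    rw [F3, Finset.card_insert_of_notMem hunot, Finset.card_biUnion hdisj]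
    simp [hSibcard]
  -- final computation
  have hYcast : ∑ w ∈ Y, ((childCount T w : ℝ) - 1) = (X.card : ℝ) - (Y.card : ℝ) := by
    rw [Finset.sum_sub_distrib, F1]
    push_cast
    simp
  rw [hYcast]
  have hXD : (X.card : ℝ) - (Y.card : ℝ) = (D.card : ℝ) - 1 := by
    have : (X.card : ℝ) + 1 = (Y.card : ℝ) + (D.card : ℝ) := by exact_mod_cast congrArg (Nat.cast : ℕ → ℝ) F2
    linarith
  rw [hXD, F6]
  push_cast
  rw [add_sub_cancel_right]
  apply Finset.sum_congr rfl
  intro k hk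
  rw [Finset.mem_range] at hk
  rw [Nat.cast_sub (idx_bounds hT hu hk).2]

theorem sortsum {T : Finset (List ℕ)} (L : List (List ℕ)) (hL : L = T.sort (· ≤ ·))
    {i : ℕ} (hi : i < L.length) (f : List ℕ → ℝ) :
    ∑ j ∈ Finset.range i, f (L.getD j []) =
      ∑ w ∈ T.filter (fun w => w < L.getD i []), f w := by
  classical
  have hs : L.Pairwise (· < ·) := by rw [hL]; exact List.sortedLT_iff_pairwise.mp (Finset.sortedLT_sort T)
  have hmemL : ∀ w, w ∈ L ↔ w ∈ T := by intro w; rw [hL]; exact Finset.mem_sort _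
  have hget : ∀ j (h : j < L.length), L.getD j [] = L[j] := fun j h => List.getD_eq_getElem L [] h
  have hpw : ∀ (a b : ℕ) (ha : a < L.length) (hb : b < L.length), a < b → L[a] < L[b] := by
    intro a b ha hb hab
    exact List.pairwise_iff_get.mp hs ⟨a, ha⟩ ⟨b, hb⟩ hab
  have hnd : L.Nodup := hs.nodup
  refine Finset.sum_bij (fun j _ => L.getD j []) ?_ ?_ ?_ ?_
  · intro j hj
    rw [Finset.mem_range] at hj
    have hjL : j < L.length := lt_trans hj hi
    show L.getD j [] ∈ Finset.filter _ T
    rw [Finset.mem_filter, hget j hjL, hget i hi]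
    exact ⟨(hmemL _).mp (List.getElem_mem hjL), hpw j i hjL hi hj⟩
  · intro j hj j' hj' he
    rw [Finset.mem_range] at hj hj'
    have hjL : j < L.length := lt_trans hj hi
    have hjL' : j' < L.length := lt_trans hj' hi
    have he' : L[j] = L[j'] := by rw [← hget j hjL, ← hget j' hjL']; exact he
    by_contra hne
    rcases Nat.lt_or_ge j j' with h | h
    · exact absurd he' (ne_of_lt (hpw j j' hjL hjL' h))
    · rcases lt_or_eq_of_le h with h' | h'
      · exact absurd he'.symm (ne_of_lt (hpw j' j hjL' hjL h'))
      · exact hne h'.symm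
  · intro w hw
    rw [Finset.mem_filter, hget i hi] at hw
    obtain ⟨hwT, hwlt⟩ := hw
    obtain ⟨j, hjL, hj⟩ := List.getElem_of_mem ((hmemL w).mpr hwT)
    refine ⟨j, Finset.mem_range.mpr ?_, by show L.getD j [] = w; rw [hget j hjL, hj]⟩
    by_contra h
    push_neg at h
    rcases lt_or_eq_of_le h with h' | h'
    · have := hpw i j hi hjL h'
      rw [hj] at this
      exact lt_asymm hwlt this
    · subst h'; rw [hj] at hwlt; exact lt_irrefl _ hwlt
  · intro j hj; rfl

/-- **The head of the deterministic snake interpolates between the height process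
and the Łukasiewicz path.**  For a finite ordered rooted tree `T` with `n` vertices
listed `v₁ < v₂ < ⋯ < vₙ` in depth-first (lexicographic) order, and displacements
`α₁ - (2/α₂)(c(v) - j)`, the spatial location of `v_{i+1}` equals
`α₁ · H(i) - (2/α₂) · W(i)` where `H(i) = |v_{i+1}|` is the height process and
`W(i) = ∑_{j=1}^{i} (c(v_j) - 1)` is the Łukasiewicz path. -/
theorem stmt0 (α₁ α₂ : ℝ) (hα₂ : α₂ ≠ 0)
    (T : Finset (List ℕ)) (hT : IsOrderedTree T) (n : ℕ) (hn : n = T.card) (hn0 : 0 < n)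
    (L : List (List ℕ)) (hL : L = T.sort (· ≤ ·))
    (i : ℕ) (hi : i ≤ n - 1) :
    spatialLoc α₁ α₂ T (L.getD i []) =
      α₁ * ((L.getD i []).length : ℝ) -
        (2 / α₂) * ∑ j ∈ Finset.range i, ((childCount T (L.getD j []) : ℝ) - 1) := by
  classical
  have hlen : L.length = n := by rw [hL, Finset.length_sort, hn]
  have hiL : i < L.length := by omega
  have huT : L.getD i [] ∈ T := by
    rw [List.getD_eq_getElem L [] hiL, ← Finset.mem_sort (α := List ℕ) (· ≤ ·), ← hL]
    exact List.getElem_mem hiL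
  rw [spatialLoc]
  have halg : ∑ k ∈ Finset.range (L.getD i []).length,
      (α₁ - (2 / α₂) * ((childCount T ((L.getD i []).take k) : ℝ) - ((L.getD i []).getD k 0 : ℝ)))
      = α₁ * ((L.getD i []).length : ℝ) -
        (2 / α₂) * ∑ k ∈ Finset.range (L.getD i []).length,
          ((childCount T ((L.getD i []).take k) : ℝ) - ((L.getD i []).getD k 0 : ℝ)) := by
    rw [Finset.sum_sub_distrib, Finset.sum_const, ← Finset.mul_sum, Finset.card_range]
    rw [nsmul_eq_mul, mul_comm]
  rw [halg, ← key hT huT, sortsum L hL hiL (fun w => (childCount T w : ℝ) - 1)]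
end
end

section
/- Let X₁, X₂, … be i.i.d. nonnegative random variables with E[X₁] = μ < ∞, and let (aₙ) be a sequence of positive reals with aₙ → ∞. Then almost surely, for every T > 0, sup_{0 ≤ t ≤ T} | (1/aₙ) Σ_{i=1}^{⌊aₙ t⌋} Xᵢ − μt | → 0 as n → ∞. -/
open MeasureTheory ProbabilityTheory Filter Topology

lemma det_fslln (s : ℕ → ℝ) (hmono : Monotone s) (hs0 : s 0 = 0)
    (μv : ℝ) (hlim : Tendsto (fun n : ℕ => s n / n) atTop (𝓝 μv))
    (a : ℕ → ℝ) (ha : ∀ n, 0 < a n) (hatop : Tendsto a atTop atTop)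
    (T : ℝ) (hT : 0 < T) :
    Tendsto (fun n : ℕ => ⨆ t : Set.Icc (0 : ℝ) T,
        |(a n)⁻¹ * s ⌊a n * (t : ℝ)⌋₊ - μv * (t : ℝ)|) atTop (𝓝 0) := by
  haveI : Nonempty (Set.Icc (0 : ℝ) T) := ⟨⟨0, le_refl 0, hT.le⟩⟩
  have hμ0 : 0 ≤ μv := by
    refine ge_of_tendsto hlim (Eventually.of_forall fun n => ?_)
    have : 0 ≤ s n := hs0 ▸ hmono (Nat.zero_le n)
    positivity
  rw [Metric.tendsto_atTop]
  intro ε hε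
  set ε₁ : ℝ := ε / (4 * (T + 1)) with hε₁def
  have hε₁ : 0 < ε₁ := by positivity
  obtain ⟨M, hM⟩ := (Metric.tendsto_atTop.1 hlim) ε₁ hε₁
  set K : ℝ := μv + s M + μv * M with hKdef
  have hsM : 0 ≤ s M := hs0 ▸ hmono (Nat.zero_le M)
  have hK0 : 0 ≤ K := by positivity
  have hKto : Tendsto (fun n => K / a n) atTop (𝓝 0) :=
    tendsto_const_nhds.div_atTop hatop
  have hEv : ∀ᶠ n in atTop, K / a n < ε / 4 :=
    (tendsto_order.1 hKto).2 _ (by positivity)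
  rw [Filter.eventually_atTop] at hEv
  obtain ⟨N, hN⟩ := hEv
  refine ⟨N, fun n hn => ?_⟩
  have han := ha n
  have hKn := hN n hn
  -- pointwise bound
  have key : ∀ t : Set.Icc (0 : ℝ) T,
      |(a n)⁻¹ * s ⌊a n * (t : ℝ)⌋₊ - μv * (t : ℝ)| ≤ ε₁ * T + K / a n := by
    rintro ⟨t, ht0, htT⟩
    dsimp only
    set k : ℕ := ⌊a n * t⌋₊ with hkdef
    have hat : 0 ≤ a n * t := by positivity
    have hk_le : (k : ℝ) ≤ a n * t := Nat.floor_le hat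
    have hk_gt : a n * t < k + 1 := Nat.lt_floor_add_one _
    by_cases hkM : M ≤ k
    · have hsk := hM k hkM
      rw [Real.dist_eq] at hsk
      have h1 : |s k - μv * k| ≤ ε₁ * k := by
        rcases Nat.eq_zero_or_pos k with h0 | hpos
        · simp [h0, hs0]
        · have hk0 : (0 : ℝ) < k := by exact_mod_cast hpos
          have : s k - μv * k = (s k / k - μv) * k := by field_simp
          rw [this, abs_mul, abs_of_pos hk0]
          exact mul_le_mul_of_nonneg_right hsk.le hk0.le
      have h2 : |s k - μv * (a n * t)| ≤ ε₁ * (a n * t) + μv := by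
        calc |s k - μv * (a n * t)|
            ≤ |s k - μv * k| + |μv * k - μv * (a n * t)| := abs_sub_le _ _ _
          _ ≤ ε₁ * k + μv * (a n * t - k) := by
              refine add_le_add h1 ?_
              rw [← mul_sub, abs_mul, abs_of_nonneg hμ0, abs_of_nonpos (by linarith)]
              nlinarith
          _ ≤ ε₁ * (a n * t) + μv := by nlinarith
      have heq : (a n)⁻¹ * s k - μv * t = (a n)⁻¹ * (s k - μv * (a n * t)) := by
        field_simp
      rw [heq, abs_mul, abs_of_pos (inv_pos.2 han)]
      have : (a n)⁻¹ * |s k - μv * (a n * t)| ≤ (a n)⁻¹ * (ε₁ * (a n * t) + μv) := by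
        exact mul_le_mul_of_nonneg_left h2 (inv_pos.2 han).le
      refine this.trans ?_
      rw [div_eq_inv_mul, hKdef]
      have h3 : (a n)⁻¹ * (ε₁ * (a n * t)) = ε₁ * t := by field_simp
      have h4 : ε₁ * t ≤ ε₁ * T := mul_le_mul_of_nonneg_left htT hε₁.le
      have h5 : (0:ℝ) ≤ μv * M := by positivity
      have hi : (0:ℝ) < (a n)⁻¹ := inv_pos.2 han
      nlinarith
    · push_neg at hkM
      have hsk : s k ≤ s M := hmono hkM.le
      have hsk0 : 0 ≤ s k := hs0 ▸ hmono (Nat.zero_le k)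
      have htM : a n * t < M := by
        have := (Nat.floor_lt hat).1 hkM
        exact_mod_cast this
      have hμt : μv * t ≤ μv * M / a n := by
        rw [div_eq_inv_mul]
        rcases eq_or_lt_of_le hμ0 with h | h
        · rw [← h]; simp
        · have : t ≤ M / a n := by
            rw [le_div_iff₀ han]; linarith [htM]
          calc μv * t ≤ μv * (M / a n) := mul_le_mul_of_nonneg_left this hμ0
            _ = (a n)⁻¹ * (μv * M) := by ring
      calc |(a n)⁻¹ * s k - μv * t| ≤ |(a n)⁻¹ * s k| + |μv * t| := abs_sub _ _
        _ = (a n)⁻¹ * s k + μv * t := by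
            rw [abs_of_nonneg (by positivity), abs_of_nonneg (by positivity)]
        _ ≤ ε₁ * T + K / a n := by
            have h6 : (a n)⁻¹ * s k ≤ s M / a n := by
              rw [div_eq_inv_mul]
              exact mul_le_mul_of_nonneg_left hsk (by positivity)
            have h9 : (s M + μv * ↑M) / a n ≤ K / a n :=
              (div_le_div_iff_of_pos_right han).2 (by rw [hKdef]; linarith)
            have he : s M / a n + μv * ↑M / a n = (s M + μv * ↑M) / a n := by ring
            have hT0 : 0 ≤ ε₁ * T := mul_nonneg hε₁.le hT.le
            linarith [h6, hμt]
  have hbdd : BddAbove (Set.range fun t : Set.Icc (0 : ℝ) T =>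
      |(a n)⁻¹ * s ⌊a n * (t : ℝ)⌋₊ - μv * (t : ℝ)|) := by
    refine ⟨ε₁ * T + K / a n, ?_⟩
    rintro x ⟨t, rfl⟩
    exact key t
  have hsup_le : (⨆ t : Set.Icc (0 : ℝ) T,
      |(a n)⁻¹ * s ⌊a n * (t : ℝ)⌋₊ - μv * (t : ℝ)|) ≤ ε₁ * T + K / a n :=
    ciSup_le key
  have hsup_ge : 0 ≤ ⨆ t : Set.Icc (0 : ℝ) T,
      |(a n)⁻¹ * s ⌊a n * (t : ℝ)⌋₊ - μv * (t : ℝ)| := by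
    have h0 := le_ciSup hbdd (⟨0, le_refl 0, hT.le⟩ : Set.Icc (0 : ℝ) T)
    simpa [hs0] using h0
  rw [Real.dist_eq, sub_zero, abs_of_nonneg hsup_ge]
  have hbnd : ε₁ * T ≤ ε / 4 := by
    rw [hε₁def, div_mul_eq_mul_div, div_le_div_iff₀ (by positivity) (by norm_num)]
    nlinarith
  linarith

/-- **Functional strong law of large numbers.**
If `X₁, X₂, …` are i.i.d. nonnegative random variables with finite mean `μv` and
`aₙ → ∞` is a sequence of positive reals, then almost surely, for every `T > 0`,
`sup_{0 ≤ t ≤ T} |(1/aₙ) ∑_{i ≤ ⌊aₙ t⌋} Xᵢ − μv·t| → 0` as `n → ∞`. -/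
theorem stmt7 {Ω : Type*} [MeasurableSpace Ω] (P : Measure Ω) [IsProbabilityMeasure P]
    (X : ℕ → Ω → ℝ) (hmeas : ∀ i, Measurable (X i))
    (hindep : iIndepFun X P)
    (hident : ∀ i, IdentDistrib (X i) (X 0) P P)
    (hpos : ∀ i ω, 0 ≤ X i ω)
    (hint : Integrable (X 0) P) (μv : ℝ) (hμ : ∫ ω, X 0 ω ∂P = μv)
    (a : ℕ → ℝ) (ha : ∀ n, 0 < a n) (hatop : Tendsto a atTop atTop) :
    ∀ᵐ ω ∂P, ∀ T : ℝ, 0 < T →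
      Tendsto (fun n : ℕ => ⨆ t : Set.Icc (0 : ℝ) T,
          |(a n)⁻¹ * ∑ i ∈ Finset.range ⌊a n * (t : ℝ)⌋₊, X i ω - μv * (t : ℝ)|)
        atTop (nhds 0) := by
  have hsl := strong_law_ae_real X hint (fun i j hij => hindep.indepFun hij) hident
  filter_upwards [hsl] with ω hω T hT
  have hω' : Tendsto (fun n : ℕ => (∑ i ∈ Finset.range n, X i ω) / n) atTop (𝓝 μv) := by
    rwa [show P[X 0] = μv from hμ] at hω
  have hmono : Monotone (fun k => ∑ i ∈ Finset.range k, X i ω) := by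
    apply monotone_nat_of_le_succ
    intro k
    rw [Finset.sum_range_succ]
    exact le_add_of_nonneg_right (hpos k ω)
  exact det_fslln _ hmono (by simp) μv hω' a ha hatop T hT
end

section
/- Let X be a random variable taking values in the positive integers with E[X] > 0 and E[X³] < ∞. Let (E_n)_{n≥1} be events with P(E_n) = 1 − O(1/n). Let X_n be distributed as X conditioned on E_n, let X̄_n have the size-biased law of X_n, and let X̄ have the size-biased law of X. Then the total variation distance satisfies d_TV(X̄_n, X̄) = (1/2)·Σ_{k≥1} |P(X̄_n = k) − P(X̄ = k)| = O(n^{−2/3}). -/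
open MeasureTheory Filter

section
variable {Ω : Type*} [MeasurableSpace Ω] (P : Measure Ω) [IsProbabilityMeasure P]

lemma keyHasSum (X : Ω → ℕ) (hX : Measurable X) (hXi : Integrable (fun ω => (X ω : ℝ)) P)
    (A : Set Ω) :
    HasSum (fun k : ℕ => (k : ℝ) * (P ({ω | X ω = k} ∩ A)).toReal)
      (∫ ω in A, (X ω : ℝ) ∂P) := by
  set ν := (P.restrict A).map X with hν
  have hcast : Measurable (fun k : ℕ => (k : ℝ)) := measurable_from_top
  have hint : Integrable (fun k : ℕ => (k : ℝ)) ν := by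
    rw [hν, integrable_map_measure hcast.aestronglyMeasurable hX.aemeasurable]
    exact hXi.restrict
  have h1 : ∫ k, (k : ℝ) ∂ν = ∫ ω in A, (X ω : ℝ) ∂P := by
    rw [hν, integral_map hX.aemeasurable hcast.aestronglyMeasurable]
  have hνk : ∀ k : ℕ, ν {k} = P ({ω | X ω = k} ∩ A) := by
    intro k
    rw [hν, Measure.map_apply hX (measurableSet_singleton k),
      Measure.restrict_apply (hX (measurableSet_singleton k))]
    rfl
  have hsum := Measure.sum_smul_dirac ν
  rw [← hsum] at hint
  have h2 := hasSum_integral_measure (f := fun k : ℕ => (k : ℝ)) hint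
  rw [hsum] at h2
  rw [h1] at h2
  have h3 : (fun k : ℕ => (k : ℝ) * (P ({ω | X ω = k} ∩ A)).toReal)
      = fun i => ∫ x, (x : ℝ) ∂(ν {i} • Measure.dirac i) := by
    funext k
    rw [integral_smul_measure, integral_dirac, hνk k]
    simp [mul_comm, measureReal_def]
  rw [h3]; exact h2

lemma tailBound (X : Ω → ℕ) (hX : Measurable X)
    (h3 : Integrable (fun ω => (X ω : ℝ) ^ 3) P)
    (A : Set Ω) (hA : MeasurableSet A) (n : ℕ) (hn : 1 ≤ n)
    (C₀ : ℝ) (hC : (P Aᶜ).toReal ≤ C₀ / n) :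
    ∫ ω in Aᶜ, (X ω : ℝ) ∂P
      ≤ (C₀ + ∫ ω, (X ω : ℝ) ^ 3 ∂P) * (n : ℝ) ^ (-(2 / 3) : ℝ) := by
  have hnpos : (0 : ℝ) < n := by exact_mod_cast hn
  have hn1 : (1 : ℝ) ≤ n := by exact_mod_cast hn
  set M : ℝ := (n : ℝ) ^ ((1 : ℝ) / 3) with hM
  have hM1 : (1 : ℝ) ≤ M := Real.one_le_rpow hn1 (by norm_num)
  have hMpos : (0 : ℝ) < M := lt_of_lt_of_le one_pos hM1
  have hXmeas : Measurable (fun ω => (X ω : ℝ)) :=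
    (measurable_from_top (f := fun k : ℕ => (k : ℝ))).comp hX
  -- pointwise bound
  have hpt : ∀ ω, (X ω : ℝ) ≤ M + (X ω : ℝ) ^ 3 / M ^ 2 := by
    intro ω
    rcases le_or_gt (X ω : ℝ) M with h | h
    · have : (0 : ℝ) ≤ (X ω : ℝ) ^ 3 / M ^ 2 := by positivity
      linarith
    · have hx : (0 : ℝ) ≤ (X ω : ℝ) := Nat.cast_nonneg _
      have h2 : M ^ 2 ≤ (X ω : ℝ) ^ 2 := by nlinarith
      have h4 : (X ω : ℝ) ≤ (X ω : ℝ) ^ 3 / M ^ 2 := by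
        rw [le_div_iff₀ (by positivity)]; nlinarith
      linarith

  have hint1 : Integrable (fun _ : Ω => M) (P.restrict Aᶜ) := integrable_const _
  have hint2 : Integrable (fun ω => (X ω : ℝ) ^ 3 / M ^ 2) (P.restrict Aᶜ) :=
    (h3.div_const _).restrict
  have step1 : ∫ ω in Aᶜ, (X ω : ℝ) ∂P ≤ ∫ ω in Aᶜ, (M + (X ω : ℝ) ^ 3 / M ^ 2) ∂P := by
    apply integral_mono_of_nonneg
    · exact Filter.Eventually.of_forall fun ω => Nat.cast_nonneg _
    · exact hint1.add hint2
    · exact Filter.Eventually.of_forall hpt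
  have step2 : ∫ ω in Aᶜ, (M + (X ω : ℝ) ^ 3 / M ^ 2) ∂P
      = (P Aᶜ).toReal * M + (∫ ω in Aᶜ, (X ω : ℝ) ^ 3 ∂P) / M ^ 2 := by
    rw [integral_add hint1 hint2, setIntegral_const, integral_div]
    simp [smul_eq_mul, measureReal_def]
  have step3 : ∫ ω in Aᶜ, (X ω : ℝ) ^ 3 ∂P ≤ ∫ ω, (X ω : ℝ) ^ 3 ∂P :=
    setIntegral_le_integral h3 (Filter.Eventually.of_forall fun ω => by positivity)
  have hI3 : (0 : ℝ) ≤ ∫ ω, (X ω : ℝ) ^ 3 ∂P :=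
    integral_nonneg fun ω => by positivity
  -- rpow arithmetic
  have e1 : M / n = (n : ℝ) ^ (-(2 / 3) : ℝ) := by
    rw [hM, div_eq_mul_inv, ← Real.rpow_neg_one (n : ℝ), ← Real.rpow_add hnpos]
    norm_num
  have e2 : M ^ 2 = (n : ℝ) ^ ((2 : ℝ) / 3) := by
    rw [hM, ← Real.rpow_natCast (((n : ℝ) ^ ((1:ℝ)/3))) 2, ← Real.rpow_mul hnpos.le]
    norm_num
  have e3 : ((n : ℝ) ^ ((2 : ℝ) / 3))⁻¹ = (n : ℝ) ^ (-(2 / 3) : ℝ) := by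
    rw [← Real.rpow_neg hnpos.le]
  calc ∫ ω in Aᶜ, (X ω : ℝ) ∂P ≤ (P Aᶜ).toReal * M + (∫ ω in Aᶜ, (X ω : ℝ) ^ 3 ∂P) / M ^ 2 := by
        rw [← step2]; exact step1
    _ ≤ (C₀ / n) * M + (∫ ω, (X ω : ℝ) ^ 3 ∂P) / M ^ 2 :=
        add_le_add (mul_le_mul_of_nonneg_right hC hMpos.le)
          (by gcongr)
    _ = C₀ * (M / n) + (∫ ω, (X ω : ℝ) ^ 3 ∂P) * (M ^ 2)⁻¹ := by ring
    _ = (C₀ + ∫ ω, (X ω : ℝ) ^ 3 ∂P) * (n : ℝ) ^ (-(2 / 3) : ℝ) := by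
        rw [e1, e2, e3]; ring

end

lemma tv_bound (f g : ℕ → ℝ) (μA μ δ : ℝ) (hf : HasSum f μA) (hg : HasSum g μ)
    (hfg : ∀ k, f k ≤ g k) (hf0 : ∀ k, 0 ≤ f k) (hμ : 0 < μ) (hμA0 : 0 ≤ μA)
    (hδ : μA + δ = μ) :
    (1 / 2) * ∑' k, |f k / μA - g k / μ| ≤ 1 ∧
      (μ / 2 ≤ μA → (1 / 2) * ∑' k, |f k / μA - g k / μ| ≤ 2 * δ / μ) := by
  have hμAle : μA ≤ μ := hasSum_le hfg hf hg
  have hδ0 : 0 ≤ δ := by linarith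
  have hg0 : ∀ k, 0 ≤ g k := fun k => (hf0 k).trans (hfg k)
  constructor
  · -- crude bound
    have hterm : ∀ k, |f k / μA - g k / μ| ≤ f k / μA + g k / μ := by
      intro k
      have h1 : 0 ≤ f k / μA := div_nonneg (hf0 k) hμA0
      have h2 : 0 ≤ g k / μ := div_nonneg (hg0 k) hμ.le
      exact abs_le.mpr ⟨by linarith, by linarith⟩
    have hRHS : HasSum (fun k => f k / μA + g k / μ) (μA / μA + μ / μ) :=
      (hf.div_const _).add (hg.div_const _)
    have hLHSsum : Summable (fun k => |f k / μA - g k / μ|) :=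
      Summable.of_nonneg_of_le (fun k => abs_nonneg _) hterm hRHS.summable
    have := Summable.tsum_le_tsum hterm hLHSsum hRHS.summable
    rw [hRHS.tsum_eq] at this
    have hA1 : μA / μA ≤ 1 := by
      rcases eq_or_lt_of_le hμA0 with h | h
      · simp [← h]
      · rw [div_self h.ne']
    have hB1 : μ / μ = 1 := div_self hμ.ne'
    nlinarith
  · -- fine bound
    intro hhalf
    have hμApos : 0 < μA := by linarith
    have hterm : ∀ k, |f k / μA - g k / μ| ≤ (g k - f k) / μA + g k * (δ / (μA * μ)) := by
      intro k
      have hid : f k / μA - g k / μ = -((g k - f k) / μA) + g k * (δ / (μA * μ)) := by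
        rw [show δ = μ - μA by linarith]
        field_simp
        ring
      have ha : 0 ≤ (g k - f k) / μA := div_nonneg (by linarith [hfg k]) hμApos.le
      have hb : 0 ≤ g k * (δ / (μA * μ)) :=
        mul_nonneg (hg0 k) (div_nonneg hδ0 (mul_nonneg hμApos.le hμ.le))
      rw [hid]
      exact abs_le.mpr ⟨by linarith, by linarith⟩
    have hRHS : HasSum (fun k => (g k - f k) / μA + g k * (δ / (μA * μ)))
        ((μ - μA) / μA + μ * (δ / (μA * μ))) :=
      ((hg.sub hf).div_const _).add (hg.mul_right _)
    have hLHSsum : Summable (fun k => |f k / μA - g k / μ|) :=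
      Summable.of_nonneg_of_le (fun k => abs_nonneg _) hterm hRHS.summable
    have hle := Summable.tsum_le_tsum hterm hLHSsum hRHS.summable
    rw [hRHS.tsum_eq] at hle
    have hval : (μ - μA) / μA + μ * (δ / (μA * μ)) = 2 * (δ / μA) := by
      rw [show μ - μA = δ by linarith]
      field_simp
      ring
    rw [hval] at hle
    have hfin : δ / μA ≤ 2 * δ / μ := by
      rw [div_le_div_iff₀ hμApos hμ]
      nlinarith
    linarith


/-- **Total variation stability of size-biasing under conditioning.**
Let `X` be a positive-integer-valued random variable with `E[X] > 0` and
`E[X³] < ∞`, and let `(Eₙ)` be events with `P(Eₙ) = 1 − O(1/n)`.  Let `X̄ₙ` have the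
size-biased law of `X` conditioned on `Eₙ` (pmf `k ↦ k·P(X = k, Eₙ)/E[X·1_{Eₙ}]`)
and `X̄` the size-biased law of `X` (pmf `k ↦ k·P(X = k)/E[X]`).  Then
`d_TV(X̄ₙ, X̄) = (1/2)∑_{k≥1}|P(X̄ₙ=k) − P(X̄=k)| = O(n^{−2/3})`. -/
theorem stmt9 {Ω : Type*} [MeasurableSpace Ω] (P : Measure Ω) [IsProbabilityMeasure P]
    (X : Ω → ℕ) (hX : Measurable X) (hpos : ∀ ω, 1 ≤ X ω)
    (hEX : 0 < ∫ ω, (X ω : ℝ) ∂P)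
    (h3 : Integrable (fun ω => (X ω : ℝ) ^ 3) P)
    (E : ℕ → Set Ω) (hEmeas : ∀ n, MeasurableSet (E n))
    (C₀ : ℝ) (hE : ∀ n : ℕ, 1 ≤ n → (P (E n)ᶜ).toReal ≤ C₀ / n) :
    ∃ C : ℝ, ∀ n : ℕ, 1 ≤ n →
      (1 / 2) * ∑' k : ℕ,
          |(k : ℝ) * (P ({ω | X ω = k} ∩ E n)).toReal / (∫ ω in E n, (X ω : ℝ) ∂P)
            - (k : ℝ) * (P {ω | X ω = k}).toReal / (∫ ω, (X ω : ℝ) ∂P)|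
        ≤ C * (n : ℝ) ^ (-(2 / 3) : ℝ) := by
  have hXmeas : Measurable (fun ω => (X ω : ℝ)) :=
    (measurable_from_top (f := fun k : ℕ => (k : ℝ))).comp hX
  have hXi : Integrable (fun ω => (X ω : ℝ)) P := by
    refine h3.mono hXmeas.aestronglyMeasurable (Eventually.of_forall fun ω => ?_)
    have h1 : (1 : ℝ) ≤ (X ω : ℝ) := by exact_mod_cast hpos ω
    rw [Real.norm_of_nonneg (by linarith), Real.norm_of_nonneg (by positivity)]
    exact le_self_pow₀ h1 three_ne_zero
  set μ : ℝ := ∫ ω, (X ω : ℝ) ∂P with hμdef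
  set I3 : ℝ := ∫ ω, (X ω : ℝ) ^ 3 ∂P with hI3def
  have hI3one : (1 : ℝ) ≤ I3 := by
    have := integral_mono (integrable_const (1 : ℝ)) h3 (fun ω => by
      have h1 : (1 : ℝ) ≤ (X ω : ℝ) := by exact_mod_cast hpos ω
      exact one_le_pow₀ h1)
    simpa using this
  have hC₀ : 0 ≤ C₀ := by
    have := (ENNReal.toReal_nonneg).trans (hE 1 le_rfl)
    simpa using this
  set C₁ : ℝ := C₀ + I3 with hC₁def
  have hC₁pos : 0 < C₁ := by linarith
  refine ⟨2 * C₁ / μ, fun n hn => ?_⟩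
  have hnpos : (0 : ℝ) < n := by exact_mod_cast hn
  set A := E n with hA
  set μA : ℝ := ∫ ω in A, (X ω : ℝ) ∂P with hμA
  set δ : ℝ := ∫ ω in Aᶜ, (X ω : ℝ) ∂P with hδdef
  have hδbd : δ ≤ C₁ * (n : ℝ) ^ (-(2 / 3) : ℝ) :=
    tailBound P X hX h3 A (hEmeas n) n hn C₀ (hE n hn)
  have hsplit : μA + δ = μ := integral_add_compl (hEmeas n) hXi
  have hμA0 : 0 ≤ μA := setIntegral_nonneg (hEmeas n) (fun ω _ => Nat.cast_nonneg _)
  have hf : HasSum (fun k : ℕ => (k : ℝ) * (P ({ω | X ω = k} ∩ A)).toReal) μA :=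
    keyHasSum P X hX hXi A
  have hg : HasSum (fun k : ℕ => (k : ℝ) * (P {ω | X ω = k}).toReal) μ := by
    have := keyHasSum P X hX hXi Set.univ
    simpa using this
  have hfg : ∀ k : ℕ, (k : ℝ) * (P ({ω | X ω = k} ∩ A)).toReal
      ≤ (k : ℝ) * (P {ω | X ω = k}).toReal := by
    intro k
    apply mul_le_mul_of_nonneg_left _ (Nat.cast_nonneg k)
    apply ENNReal.toReal_mono (measure_ne_top P _)
    exact measure_mono Set.inter_subset_left
  have hf0 : ∀ k : ℕ, 0 ≤ (k : ℝ) * (P ({ω | X ω = k} ∩ A)).toReal :=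
    fun k => mul_nonneg (Nat.cast_nonneg k) ENNReal.toReal_nonneg
  obtain ⟨hcrude, hfine⟩ := tv_bound _ _ μA μ δ hf hg hfg hf0 hEX hμA0 hsplit
  have hrpow : (0 : ℝ) < (n : ℝ) ^ (-(2 / 3) : ℝ) := Real.rpow_pos_of_pos hnpos _
  rcases le_or_gt δ (μ / 2) with hcase | hcase
  · have h1 : μ / 2 ≤ μA := by linarith
    refine (hfine h1).trans ?_
    rw [div_mul_eq_mul_div, div_le_div_iff₀ hEX hEX]
    · nlinarith
  · refine hcrude.trans ?_
    have : μ < 2 * (C₁ * (n : ℝ) ^ (-(2 / 3) : ℝ)) := by linarith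
    rw [div_mul_eq_mul_div, le_div_iff₀ hEX]
    nlinarith
end

section
/- Let ξ̄₁, ξ̄₂, … be i.i.d. positive-integer-valued random variables with E[ξ̄₁] = 1 + σ² for some σ² > 0, and let t > 0. Then as n → ∞, ∏_{i=1}^{⌊t√n⌋} ((n − i + 1)/(n − 1 − Σ_{j=1}^{i−1} ξ̄_j)) converges in probability to exp(t²σ²/2). -/
open MeasureTheory ProbabilityTheory Filter Finset Topology

private lemma sqrt_nat_atTop : Tendsto (fun n : ℝ => Real.sqrt n) atTop atTop := by
  apply tendsto_atTop_atTop.2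
  intro b
  refine ⟨((⌈b⌉₊ : ℝ)) ^ 2, fun n hn => ?_⟩
  have h1 : b ≤ (⌈b⌉₊ : ℝ) := Nat.le_ceil b
  have h2 : ((⌈b⌉₊ : ℝ)) = Real.sqrt ((⌈b⌉₊ : ℝ) ^ 2) := (Real.sqrt_sq (Nat.cast_nonneg _)).symm
  have h3 : Real.sqrt ((⌈b⌉₊ : ℝ) ^ 2) ≤ Real.sqrt n := Real.sqrt_le_sqrt hn
  linarith

section mfacts
variable {t : ℝ}

private lemma mfl_atTop (ht : 0 < t) : Tendsto (fun n : ℝ => ⌊t * Real.sqrt n⌋₊) atTop atTop :=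
  tendsto_nat_floor_atTop.comp (sqrt_nat_atTop.const_mul_atTop ht)

private lemma mfl_div_sqrt (ht : 0 < t) : Tendsto (fun n : ℝ => (⌊t * Real.sqrt n⌋₊ : ℝ) / Real.sqrt n)
    atTop (𝓝 t) := by
  have hsp : ∀ᶠ n : ℝ in atTop, (0:ℝ) < Real.sqrt n := by
    filter_upwards [eventually_ge_atTop 1] with n hn
    exact Real.sqrt_pos.2 (by linarith)
  have hlow : Tendsto (fun n : ℝ => t - 1 / Real.sqrt n) atTop (𝓝 t) := by
    have h0 : Tendsto (fun n : ℝ => 1 / Real.sqrt n) atTop (𝓝 0) :=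
      sqrt_nat_atTop.inv_tendsto_atTop.congr (fun n => (one_div _).symm)
    simpa using tendsto_const_nhds.sub h0
  apply tendsto_of_tendsto_of_tendsto_of_le_of_le' hlow tendsto_const_nhds
  · filter_upwards [hsp] with n hn
    rw [le_div_iff₀ hn, sub_mul, div_mul_cancel₀ _ hn.ne']
    have := Nat.sub_one_lt_floor (t * Real.sqrt n)
    nlinarith
  · filter_upwards [hsp] with n hn
    rw [div_le_iff₀ hn]
    exact Nat.floor_le (by positivity)

private lemma mfl_sq_div (ht : 0 < t) : Tendsto (fun n : ℝ => (⌊t * Real.sqrt n⌋₊ : ℝ) ^ 2 / n)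
    atTop (𝓝 (t ^ 2)) := by
  have h := (mfl_div_sqrt ht).mul (mfl_div_sqrt ht)
  rw [show t * t = t ^ 2 by ring] at h
  apply h.congr'
  filter_upwards [eventually_ge_atTop 1] with n hn
  have hms : Real.sqrt n * Real.sqrt n = n := Real.mul_self_sqrt (by linarith)
  rw [div_mul_div_comm, hms, ← sq]

private lemma mfl_div (ht : 0 < t) : Tendsto (fun n : ℝ => (⌊t * Real.sqrt n⌋₊ : ℝ) / n) atTop (𝓝 0) := by
  have h0 : Tendsto (fun n : ℝ => 1 / Real.sqrt n) atTop (𝓝 0) :=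
    sqrt_nat_atTop.inv_tendsto_atTop.congr (fun n => (one_div _).symm)
  have h := (mfl_div_sqrt ht).mul h0
  rw [mul_zero] at h
  apply h.congr'
  filter_upwards [eventually_ge_atTop 1] with n hn
  have hms : Real.sqrt n * Real.sqrt n = n := Real.mul_self_sqrt (by linarith)
  rw [div_mul_div_comm, mul_one, hms]

end mfacts

private lemma aux_exp_le {x : ℝ} (hx : 0 ≤ x) : Real.exp (x - x ^ 2) ≤ 1 + x := by
  have hpos : 0 < x ^ 2 - x + 1 := by nlinarith [sq_nonneg (x - 1)]
  have h1 : x ^ 2 - x + 1 ≤ Real.exp (x ^ 2 - x) := by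
    have := Real.add_one_le_exp (x ^ 2 - x); linarith
  have h2 : Real.exp (x - x ^ 2) ≤ (x ^ 2 - x + 1)⁻¹ := by
    have he : Real.exp (x - x ^ 2) = (Real.exp (x ^ 2 - x))⁻¹ := by
      rw [← Real.exp_neg]; ring_nf
    rw [he]
    exact inv_anti₀ hpos h1
  refine h2.trans ?_
  rw [← one_div, div_le_iff₀ hpos]
  nlinarith

private lemma det_prod_tendsto (σ t : ℝ) (hσ : 0 < σ) (ht : 0 < t)
    (a : ℕ → ℝ) (ha : ∀ j, 1 ≤ a j)
    (hS : Tendsto (fun k : ℕ => (∑ j ∈ Finset.Icc 1 k, a j) / k) atTop (𝓝 (1 + σ ^ 2))) :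
    Tendsto (fun n : ℝ => ∏ i ∈ Finset.Icc 1 ⌊t * Real.sqrt n⌋₊,
      (n - (i : ℝ) + 1) / (n - 1 - ∑ j ∈ Finset.Icc 1 (i - 1), a j))
      atTop (𝓝 (Real.exp (t ^ 2 * σ ^ 2 / 2))) := by
  -- abbreviations
  set S : ℕ → ℝ := fun k => ∑ j ∈ Finset.Icc 1 k, a j with hSdef
  set m : ℝ → ℕ := fun n : ℝ => ⌊t * Real.sqrt n⌋₊ with hmdef
  set L : ℝ := t ^ 2 * σ ^ 2 / 2 with hLdef
  -- basic facts about S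
  have hSk : ∀ k : ℕ, (k : ℝ) ≤ S k := by
    intro k
    calc (k : ℝ) = ∑ _j ∈ Finset.Icc 1 k, (1:ℝ) := by simp
    _ ≤ S k := Finset.sum_le_sum (fun j _ => ha j)
  have hSmono : ∀ {p q : ℕ}, p ≤ q → S p ≤ S q := by
    intro p q hpq
    apply Finset.sum_le_sum_of_subset_of_nonneg (Finset.Icc_subset_Icc_right hpq)
    intro j _ _; linarith [ha j]
  have hSnn : ∀ k, (0:ℝ) ≤ S k := fun k => le_trans (Nat.cast_nonneg k) (hSk k)
  have hS00 : S 0 = 0 := by simp [hSdef]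
  -- m facts
  have hmtop : Tendsto m atTop atTop := mfl_atTop ht
  have hm2 : Tendsto (fun n : ℝ => (m n : ℝ) ^ 2 / n) atTop (𝓝 (t ^ 2)) := mfl_sq_div ht
  have hm0 : Tendsto (fun n : ℝ => (m n : ℝ) / n) atTop (𝓝 0) := mfl_div ht
  have hmev : ∀ᶠ n : ℝ in atTop, 1 ≤ m n := hmtop.eventually_ge_atTop 1
  -- SLLN-type consequences
  have hw : Tendsto (fun k : ℕ => (S k - (1 + σ ^ 2) * k) / k) atTop (𝓝 0) := by
    have h := hS.sub (tendsto_const_nhds (x := (1 + σ ^ 2)))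
    rw [sub_self] at h
    apply h.congr'
    filter_upwards [eventually_ge_atTop 1] with k hk
    have hk0 : (k : ℝ) ≠ 0 := by
      have : (0:ℝ) < k := by exact_mod_cast hk
      exact this.ne'
    field_simp
    ring
  have hC : Tendsto (fun M : ℕ => (∑ k ∈ range M, |(S k - (1 + σ ^ 2) * k) / k|) / (M:ℝ))
      atTop (𝓝 0) := by
    have h := hw.abs
    rw [abs_zero] at h
    exact h.cesaro.congr (fun M => by rw [inv_mul_eq_div])
  have hE : Tendsto (fun n : ℝ => (∑ k ∈ range (m n), (S k - (1 + σ ^ 2) * k)) / n)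
      atTop (𝓝 0) := by
    have hg : Tendsto (fun n : ℝ => ((m n : ℝ) ^ 2 / n) *
        ((∑ k ∈ range (m n), |(S k - (1 + σ ^ 2) * k) / k|) / (m n))) atTop (𝓝 (t ^ 2 * 0)) :=
      hm2.mul (hC.comp hmtop)
    rw [mul_zero] at hg
    apply squeeze_zero_norm' ?_ hg
    filter_upwards [hmev, eventually_ge_atTop 1] with n hm1 hn1
    have hmpos : (0:ℝ) < m n := by exact_mod_cast hm1
    have hnpos : (0:ℝ) < n := by linarith
    have key : ∀ k ∈ range (m n),
        |S k - (1 + σ ^ 2) * k| ≤ (m n : ℝ) * |(S k - (1 + σ ^ 2) * k) / k| := by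
      intro k hk
      rcases Nat.eq_zero_or_pos k with h0 | h0
      · subst h0; simp [hS00]
      · have hkpos : (0:ℝ) < k := by exact_mod_cast h0
        have hkm : (k : ℝ) ≤ m n := by exact_mod_cast (mem_range.1 hk).le
        rw [abs_div, abs_of_pos hkpos]
        calc |S k - (1 + σ ^ 2) * k| = (k : ℝ) * (|S k - (1 + σ ^ 2) * k| / k) := by
              field_simp
        _ ≤ (m n : ℝ) * (|S k - (1 + σ ^ 2) * k| / k) :=
            mul_le_mul_of_nonneg_right hkm (div_nonneg (abs_nonneg _) hkpos.le)
    calc ‖(∑ k ∈ range (m n), (S k - (1 + σ ^ 2) * k)) / n‖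
        = |∑ k ∈ range (m n), (S k - (1 + σ ^ 2) * k)| / n := by
          rw [Real.norm_eq_abs, abs_div, abs_of_pos hnpos]
    _ ≤ (∑ k ∈ range (m n), (m n : ℝ) * |(S k - (1 + σ ^ 2) * k) / k|) / n := by
          gcongr
          exact le_trans (Finset.abs_sum_le_sum_abs _ _) (Finset.sum_le_sum key)
    _ = ((m n : ℝ) ^ 2 / n) * ((∑ k ∈ range (m n), |(S k - (1 + σ ^ 2) * k) / k|) / (m n)) := by
          rw [← Finset.mul_sum]
          field_simp
  have hSmn : Tendsto (fun n : ℝ => S (m n) / n) atTop (𝓝 0) := by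
    have h := (hS.comp hmtop).mul hm0
    rw [mul_zero] at h
    apply h.congr'
    filter_upwards [hmev] with n hm1
    have hmne : (m n : ℝ) ≠ 0 := by
      have : (0:ℝ) < m n := by exact_mod_cast hm1
      exact this.ne'
    show S (m n) / (m n) * ((m n : ℝ) / n) = S (m n) / n
    field_simp
  -- Gauss sum asymptotics
  have hG : Tendsto (fun n : ℝ => (∑ k ∈ range (m n), (k : ℝ)) / n) atTop
      (𝓝 ((t ^ 2 - 0) / 2)) := by
    have h := (hm2.sub hm0).div_const 2
    apply h.congr'
    filter_upwards [hmev] with n hm1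
    have hid : (∑ k ∈ range (m n), (k : ℝ)) = ((m n : ℝ) ^ 2 - (m n : ℝ)) / 2 := by
      have h2 := Finset.sum_range_id_mul_two (m n)
      have h4 := congrArg (fun z : ℕ => (z : ℝ)) h2
      push_cast [Nat.cast_sub hm1] at h4
      nlinarith [h4]
    rw [hid]
    ring
  -- the sum of numerators
  have hA : Tendsto (fun n : ℝ =>
      (∑ i ∈ Finset.Icc 1 (m n), (S (i - 1) - (i : ℝ) + 2)) / n) atTop (𝓝 L) := by
    have h := (hE.add ((hG.const_mul (σ ^ 2)).add hm0))
    rw [show (0:ℝ) + (σ ^ 2 * ((t ^ 2 - 0) / 2) + 0) = L by rw [hLdef]; ring] at h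
    apply h.congr'
    filter_upwards [eventually_ge_atTop 1] with n hn1
    have hnne : n ≠ 0 := by positivity
    have hre : (∑ i ∈ Finset.Icc 1 (m n), (S (i - 1) - (i : ℝ) + 2))
        = ∑ k ∈ range (m n), (S k - (k:ℝ) + 1) := by
      rw [← Finset.Ico_add_one_right_eq_Icc, Finset.sum_Ico_eq_sum_range]
      apply Finset.sum_congr (by norm_num)
      intro k _
      have h1 : 1 + k - 1 = k := by omega
      rw [h1]
      push_cast
      ring
    have hsplit : (∑ k ∈ range (m n), (S k - (k:ℝ) + 1))
        = (∑ k ∈ range (m n), (S k - (1 + σ ^ 2) * k)) + σ ^ 2 * (∑ k ∈ range (m n), (k:ℝ))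
          + (m n : ℝ) := by
      rw [Finset.mul_sum, ← Finset.sum_add_distrib]
      have : ((m n : ℕ) : ℝ) = ∑ _k ∈ range (m n), (1:ℝ) := by simp
      rw [this, ← Finset.sum_add_distrib]
      apply Finset.sum_congr rfl
      intro k _
      ring
    show (∑ k ∈ range (m n), (S k - (1 + σ ^ 2) * k)) / n
        + (σ ^ 2 * ((∑ k ∈ range (m n), (k : ℝ)) / n) + (m n : ℝ) / n)
        = (∑ i ∈ Finset.Icc 1 (m n), (S (i - 1) - (i : ℝ) + 2)) / n
    rw [hre, hsplit]
    field_simp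
    ring
  -- more limits
  have hone : Tendsto (fun n : ℝ => 1 / n) atTop (𝓝 0) := tendsto_inv_atTop_zero.congr (fun z => (one_div z).symm)
  have hq : Tendsto (fun n : ℝ => (S (m n) + 1) / n) atTop (𝓝 0) := by
    have h := hSmn.add hone
    rw [add_zero] at h
    exact h.congr (fun n => (add_div _ _ _).symm)
  have hrat : Tendsto (fun n : ℝ => n / (n - 1 - S (m n))) atTop (𝓝 1) := by
    have hden : Tendsto (fun n : ℝ => (n - 1 - S (m n)) / n) atTop (𝓝 1) := by
      have h := ((tendsto_const_nhds :
        Tendsto (fun _ : ℝ => (1:ℝ)) atTop (𝓝 1)).sub hone).sub hSmn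
      rw [sub_zero, sub_zero] at h
      apply h.congr'
      filter_upwards [eventually_ge_atTop 1] with n hn1
      have hnne : n ≠ 0 := by positivity
      show (1:ℝ) - 1 / n - S (m n) / n = (n - 1 - S (m n)) / n
      field_simp
    have h := hden.inv₀ one_ne_zero
    rw [inv_one] at h
    exact h.congr (fun n => by rw [inv_div])
  have hUden : Tendsto (fun n : ℝ =>
      (∑ i ∈ Finset.Icc 1 (m n), (S (i - 1) - (i : ℝ) + 2)) / (n - 1 - S (m n)))
      atTop (𝓝 L) := by
    have h := hA.mul hrat
    rw [mul_one] at h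
    apply h.congr'
    filter_upwards [eventually_ge_atTop 1] with n hn1
    have hnne : n ≠ 0 := by positivity
    show (∑ i ∈ Finset.Icc 1 (m n), (S (i - 1) - (i : ℝ) + 2)) / n
        * (n / (n - 1 - S (m n)))
        = (∑ i ∈ Finset.Icc 1 (m n), (S (i - 1) - (i : ℝ) + 2)) / (n - 1 - S (m n))
    rw [div_mul_div_comm, mul_comm _ (n), mul_div_mul_left _ _ hnne]
  have hc : Tendsto (fun n : ℝ => (S (m n) + 1) / (n - 1 - S (m n))) atTop (𝓝 0) := by
    have h := hq.mul hrat
    rw [zero_mul] at h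
    apply h.congr'
    filter_upwards [eventually_ge_atTop 1] with n hn1
    have hnne : n ≠ 0 := by positivity
    show (S (m n) + 1) / n * (n / (n - 1 - S (m n)))
        = (S (m n) + 1) / (n - 1 - S (m n))
    rw [div_mul_div_comm, mul_comm _ (n), mul_div_mul_left _ _ hnne]
  -- the good event
  have hq4 : ∀ᶠ n : ℝ in atTop, S (m n) + 1 ≤ n/4 ∧ (4:ℝ) ≤ n ∧ 1 ≤ m n := by
    have h1 := hq.eventually_lt_const (show (0:ℝ) < 1/4 by norm_num)
    filter_upwards [h1, eventually_ge_atTop 4, hmev] with n h1n h4 hm1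
    have hn4 : (4:ℝ) ≤ n := h4
    refine ⟨?_, hn4, hm1⟩
    have hnpos : (0:ℝ) < n := by linarith
    rw [div_lt_iff₀ hnpos] at h1n
    linarith
  -- numerator lower bound
  have hN1 : ∀ i : ℕ, 1 ≤ i → 1 ≤ S (i - 1) - (i:ℝ) + 2 := by
    intro i hi
    have h1 := hSk (i - 1)
    rw [Nat.cast_sub hi] at h1
    push_cast at h1
    linarith
  -- u and v
  set u : ℝ → ℝ := fun n =>
    ∑ i ∈ Finset.Icc 1 (m n), (S (i - 1) - (i:ℝ) + 2) / (n - 1 - S (i - 1)) with hudef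
  set v : ℝ → ℝ := fun n =>
    ∑ i ∈ Finset.Icc 1 (m n), ((S (i - 1) - (i:ℝ) + 2) / (n - 1 - S (i - 1))) ^ 2 with hvdef
  have hu : Tendsto u atTop (𝓝 L) := by
    apply tendsto_of_tendsto_of_tendsto_of_le_of_le' hA hUden
    · filter_upwards [hq4] with n hn
      obtain ⟨hq4n, hn4, hm1⟩ := hn
      have hnpos : (0:ℝ) < n := by linarith
      rw [hudef, Finset.sum_div]
      apply Finset.sum_le_sum
      intro i hi
      obtain ⟨hi1, him⟩ := Finset.mem_Icc.1 hi
      have hSi : S (i - 1) ≤ S (m n) := hSmono (by omega)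
      have hnum : (1:ℝ) ≤ S (i - 1) - (i:ℝ) + 2 := hN1 i hi1
      have hD : (0:ℝ) < n - 1 - S (i - 1) := by linarith
      have hDn : n - 1 - S (i - 1) ≤ n := by
        have := hSnn (i - 1); linarith
      gcongr
    · filter_upwards [hq4] with n hn
      obtain ⟨hq4n, hn4, hm1⟩ := hn
      have hnpos : (0:ℝ) < n := by linarith
      rw [hudef, Finset.sum_div]
      apply Finset.sum_le_sum
      intro i hi
      obtain ⟨hi1, him⟩ := Finset.mem_Icc.1 hi
      have hSi : S (i - 1) ≤ S (m n) := hSmono (by omega)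
      have hnum : (1:ℝ) ≤ S (i - 1) - (i:ℝ) + 2 := hN1 i hi1
      have hDm : (0:ℝ) < n - 1 - S (m n) := by linarith
      gcongr
  have hv : Tendsto v atTop (𝓝 0) := by
    have h := hc.mul hu
    rw [zero_mul] at h
    apply tendsto_of_tendsto_of_tendsto_of_le_of_le' tendsto_const_nhds h
    · apply Filter.Eventually.of_forall
      intro n
      rw [hvdef]
      exact Finset.sum_nonneg fun i _ => sq_nonneg _
    · filter_upwards [hq4] with n hn
      obtain ⟨hq4n, hn4, hm1⟩ := hn
      have hnpos : (0:ℝ) < n := by linarith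
      rw [hvdef, hudef, Finset.mul_sum]
      apply Finset.sum_le_sum
      intro i hi
      obtain ⟨hi1, him⟩ := Finset.mem_Icc.1 hi
      have hSi : S (i - 1) ≤ S (m n) := hSmono (by omega)
      have hnum : (1:ℝ) ≤ S (i - 1) - (i:ℝ) + 2 := hN1 i hi1
      have hDm : (0:ℝ) < n - 1 - S (m n) := by linarith
      have hD : (0:ℝ) < n - 1 - S (i - 1) := by linarith
      have hx0 : (0:ℝ) ≤ (S (i - 1) - (i:ℝ) + 2) / (n - 1 - S (i - 1)) :=
        div_nonneg (by linarith) hD.le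
      have hi1R : (1:ℝ) ≤ (i:ℝ) := by exact_mod_cast hi1
      have hxc : (S (i - 1) - (i:ℝ) + 2) / (n - 1 - S (i - 1))
          ≤ (S (m n) + 1) / (n - 1 - S (m n)) :=
        div_le_div₀ (by linarith) (by linarith) hDm (by linarith)
      calc ((S (i - 1) - (i:ℝ) + 2) / (n - 1 - S (i - 1))) ^ 2
          = ((S (i - 1) - (i:ℝ) + 2) / (n - 1 - S (i - 1)))
            * ((S (i - 1) - (i:ℝ) + 2) / (n - 1 - S (i - 1))) := sq _
      _ ≤ ((S (m n) + 1) / (n - 1 - S (m n)))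
            * ((S (i - 1) - (i:ℝ) + 2) / (n - 1 - S (i - 1))) :=
          mul_le_mul_of_nonneg_right hxc hx0
  -- final squeeze
  have hexpu : Tendsto (fun n => Real.exp (u n)) atTop (𝓝 (Real.exp L)) :=
    (Real.continuous_exp.tendsto L).comp hu
  have hexpl : Tendsto (fun n => Real.exp (u n - v n)) atTop (𝓝 (Real.exp L)) := by
    have h := hu.sub hv
    rw [sub_zero] at h
    exact (Real.continuous_exp.tendsto L).comp h
  apply tendsto_of_tendsto_of_tendsto_of_le_of_le' hexpl hexpu
  · filter_upwards [hq4] with n hn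
    obtain ⟨hq4n, hn4, hm1⟩ := hn
    have hnpos : (0:ℝ) < n := by linarith
    show Real.exp (u n - v n) ≤ ∏ i ∈ Finset.Icc 1 (m n),
      ((n : ℝ) - (i : ℝ) + 1) / ((n : ℝ) - 1 - S (i - 1))
    have hterm : ∀ i ∈ Finset.Icc 1 (m n),
        ((n : ℝ) - (i : ℝ) + 1) / ((n : ℝ) - 1 - S (i - 1))
        = 1 + (S (i - 1) - (i:ℝ) + 2) / (n - 1 - S (i - 1)) := by
      intro i hi
      obtain ⟨hi1, him⟩ := Finset.mem_Icc.1 hi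
      have hSi : S (i - 1) ≤ S (m n) := hSmono (by omega)
      have hD : (0:ℝ) < n - 1 - S (i - 1) := by linarith
      field_simp
      ring
    rw [Finset.prod_congr rfl hterm]
    have hsub : u n - v n = ∑ i ∈ Finset.Icc 1 (m n),
        ((S (i - 1) - (i:ℝ) + 2) / (n - 1 - S (i - 1))
          - ((S (i - 1) - (i:ℝ) + 2) / (n - 1 - S (i - 1))) ^ 2) := by
      rw [hudef, hvdef, Finset.sum_sub_distrib]
    rw [hsub, Real.exp_sum]
    apply Finset.prod_le_prod
    · intro i _
      exact (Real.exp_pos _).le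
    · intro i hi
      obtain ⟨hi1, him⟩ := Finset.mem_Icc.1 hi
      have hSi : S (i - 1) ≤ S (m n) := hSmono (by omega)
      have hnum : (1:ℝ) ≤ S (i - 1) - (i:ℝ) + 2 := hN1 i hi1
      have hD : (0:ℝ) < n - 1 - S (i - 1) := by linarith
      exact aux_exp_le (div_nonneg (by linarith) hD.le)
  · filter_upwards [hq4] with n hn
    obtain ⟨hq4n, hn4, hm1⟩ := hn
    have hnpos : (0:ℝ) < n := by linarith
    show (∏ i ∈ Finset.Icc 1 (m n),
      ((n : ℝ) - (i : ℝ) + 1) / ((n : ℝ) - 1 - S (i - 1))) ≤ Real.exp (u n)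
    have hterm : ∀ i ∈ Finset.Icc 1 (m n),
        ((n : ℝ) - (i : ℝ) + 1) / ((n : ℝ) - 1 - S (i - 1))
        = 1 + (S (i - 1) - (i:ℝ) + 2) / (n - 1 - S (i - 1)) := by
      intro i hi
      obtain ⟨hi1, him⟩ := Finset.mem_Icc.1 hi
      have hSi : S (i - 1) ≤ S (m n) := hSmono (by omega)
      have hD : (0:ℝ) < n - 1 - S (i - 1) := by linarith
      field_simp
      ring
    rw [Finset.prod_congr rfl hterm, hudef, Real.exp_sum]
    apply Finset.prod_le_prod
    · intro i hi
      obtain ⟨hi1, him⟩ := Finset.mem_Icc.1 hi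
      have hSi : S (i - 1) ≤ S (m n) := hSmono (by omega)
      have hnum : (1:ℝ) ≤ S (i - 1) - (i:ℝ) + 2 := hN1 i hi1
      have hD : (0:ℝ) < n - 1 - S (i - 1) := by linarith
      positivity
    · intro i hi
      have := Real.add_one_le_exp
        ((S (i - 1) - (i:ℝ) + 2) / (n - 1 - S (i - 1)))
      linarith

/-- **Convergence in probability of the size-biased correction product.**
Let `ξ̄₁, ξ̄₂, …` be i.i.d. random variables with values in `{1,2,…}` and finite
mean `1 + σ²`, `σ² > 0`, and let `t > 0`.  Then
`∏_{i=1}^{⌊t√n⌋} (n − i + 1)/(n − 1 − ∑_{j=1}^{i−1} ξ̄_j) → exp(t²σ²/2)`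
in probability as `n → ∞`. -/
theorem stmt10 {Ω : Type*} [MeasurableSpace Ω] (P : Measure Ω) [IsProbabilityMeasure P]
    (ξ : ℕ → Ω → ℕ) (hmeas : ∀ i, Measurable (ξ i))
    (hindep : iIndepFun ξ P)
    (hident : ∀ i, IdentDistrib (ξ i) (ξ 1) P P)
    (hpos : ∀ i ω, 1 ≤ ξ i ω) (σ : ℝ) (hσ : 0 < σ)
    (hint : Integrable (fun ω => (ξ 1 ω : ℝ)) P)
    (hmean : ∫ ω, (ξ 1 ω : ℝ) ∂P = 1 + σ ^ 2)
    (t : ℝ) (ht : 0 < t) :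
    TendstoInMeasure P
      (fun n ω => ∏ i ∈ Finset.Icc 1 ⌊t * Real.sqrt n⌋₊,
        ((n : ℝ) - (i : ℝ) + 1) / ((n : ℝ) - 1 - ∑ j ∈ Finset.Icc 1 (i - 1), (ξ j ω : ℝ)))
      atTop (fun _ => Real.exp (t ^ 2 * σ ^ 2 / 2)) := by
  have hcast : Measurable (fun x : ℕ => (x : ℝ)) := measurable_from_top
  set X : ℕ → Ω → ℝ := fun i ω => (ξ (i + 1) ω : ℝ) with hX
  have hint' : Integrable (X 0) P := hint
  have hindep' : Pairwise (Function.onFun (IndepFun · · P) X) := by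
    intro i j hij
    have h := hindep.indepFun (show i + 1 ≠ j + 1 by omega)
    exact h.comp hcast hcast
  have hident' : ∀ i, IdentDistrib (X i) (X 0) P P := fun i =>
    ((hident (i + 1)).trans (hident 1).symm).comp hcast
  have hSLLN := strong_law_ae_real X hint' hindep' hident'
  have hmean' : (∫ ω, X 0 ω ∂P) = 1 + σ ^ 2 := hmean
  rw [hmean'] at hSLLN
  have hae : ∀ᵐ ω ∂P, Tendsto (fun n : ℝ => ∏ i ∈ Finset.Icc 1 ⌊t * Real.sqrt n⌋₊,
      ((n : ℝ) - (i : ℝ) + 1) / ((n : ℝ) - 1 - ∑ j ∈ Finset.Icc 1 (i - 1), (ξ j ω : ℝ)))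
      atTop (𝓝 (Real.exp (t ^ 2 * σ ^ 2 / 2))) := by
    filter_upwards [hSLLN] with ω hω
    apply det_prod_tendsto σ t hσ ht (fun j => (ξ j ω : ℝ))
      (fun j => by simpa using (Nat.one_le_cast (α := ℝ)).mpr (hpos j ω))
    apply hω.congr
    intro k
    congr 1
    rw [← Finset.Ico_add_one_right_eq_Icc, Finset.sum_Ico_eq_sum_range]
    apply Finset.sum_congr (by norm_num)
    intro x _
    simp [hX, Nat.add_comm]
  have hmeasf : ∀ n : ℝ, AEStronglyMeasurable (fun ω =>
      ∏ i ∈ Finset.Icc 1 ⌊t * Real.sqrt n⌋₊,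
      ((n : ℝ) - (i : ℝ) + 1) / ((n : ℝ) - 1 - ∑ j ∈ Finset.Icc 1 (i - 1), (ξ j ω : ℝ))) P := by
    intro n
    apply Measurable.aestronglyMeasurable
    apply Finset.measurable_prod
    intro i _
    exact measurable_const.div (measurable_const.sub
      (Finset.measurable_sum _ (fun j _ => hcast.comp (hmeas j))))
  intro ε hε
  rw [Filter.tendsto_iff_seq_tendsto]
  intro useq huseq
  have haeu : ∀ᵐ ω ∂P, Tendsto (fun k : ℕ => ∏ i ∈ Finset.Icc 1 ⌊t * Real.sqrt (useq k)⌋₊,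
      ((useq k : ℝ) - (i : ℝ) + 1) /
        ((useq k : ℝ) - 1 - ∑ j ∈ Finset.Icc 1 (i - 1), (ξ j ω : ℝ)))
      atTop (𝓝 (Real.exp (t ^ 2 * σ ^ 2 / 2))) := by
    filter_upwards [hae] with ω hω
    exact hω.comp huseq
  exact tendstoInMeasure_of_tendsto_ae (fun k => hmeasf (useq k)) haeu ε hε
end

section
/- Let (ξ̄, Y) be such that ξ̄ is a positive-integer-valued random variable and conditionally on ξ̄ = k, Y = (Y_{k,1},…,Y_{k,k}) is a random vector in ℝᵏ; let U be uniform on [ξ̄] independent of Y given ξ̄. Assume E[Y_{ξ̄,U}] = 0, E[Y_{ξ̄,U}²] = β² < ∞, and that there exists c > 0 with P(max_{1≤i≤ξ̄}|Y_{ξ̄,i}| > y) ≤ c·y^{−2(4−η)/3} for all y > 0, where η ∈ [0,2). Fix δ ∈ (0, 1/(4−η)) and set τₙ = n^{1/(4−η)−δ}. Define the truncated variable Y^{n,δ}_{ξ̄,U} = Y_{ξ̄,U}·1{max_{1≤i≤ξ̄}|Y_{ξ̄,i}| ≤ τₙ}. Then |E[Y^{n,δ}_{ξ̄,U}]| = O(τₙ^{1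 − 2(4−η)/3}), and Var(Y^{n,δ}_{ξ̄,U}) → β² as n → ∞. -/
open MeasureTheory Filter Set

-- tail bound lemma: single τ
lemma key_s14 {Ω : Type*} [MeasurableSpace Ω] (P : Measure Ω) [IsProbabilityMeasure P]
    (Z M : Ω → ℝ) (hZ : Measurable Z) (hM : Measurable M)
    (hZM : ∀ ω, |Z ω| ≤ M ω)
    (hint1 : Integrable Z P) (hcenter : ∫ ω, Z ω ∂P = 0)
    (c : ℝ) (hc : 0 < c) (a : ℝ) (ha : 1 < a)
    (htail : ∀ y : ℝ, 0 < y → (P {ω | y < M ω}).toReal ≤ c * y ^ (-a))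
    (τ : ℝ) (hτ : 0 < τ) :
    |∫ ω in {ω | M ω ≤ τ}, Z ω ∂P| ≤ (c + c / (a - 1)) * τ ^ (1 - a) := by
  have hs : MeasurableSet {ω | M ω ≤ τ} := measurableSet_le hM measurable_const
  have hcompl : {ω | M ω ≤ τ}ᶜ = {ω | τ < M ω} := by ext ω; simp [not_le]
  have hsplit := integral_add_compl hs hint1 (f := Z)
  rw [hcenter] at hsplit
  have h1 : ∫ ω in {ω | M ω ≤ τ}, Z ω ∂P = -∫ ω in {ω | τ < M ω}, Z ω ∂P := by
    rw [← hcompl]; linarith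
  rw [h1, abs_neg]
  -- f = (M - τ)⁺
  set f : Ω → ℝ := fun ω => max (M ω - τ) 0 with hf
  have hfm : Measurable f := (hM.sub measurable_const).max measurable_const
  have hfnn : ∀ ω, 0 ≤ f ω := fun ω => le_max_right _ _
  -- layer cake bound for lintegral of f
  have hlay : ∫⁻ ω, ENNReal.ofReal (f ω) ∂P
      = ∫⁻ t in Ioi (0:ℝ), P {ω | t < f ω} := by
    exact lintegral_eq_lintegral_meas_lt P (ae_of_all _ hfnn) hfm.aemeasurable
  have hsetfeq : ∀ t : ℝ, 0 < t → {ω | t < f ω} = {ω | τ + t < M ω} := by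
    intro t ht; ext ω
    simp only [hf, mem_setOf_eq, lt_max_iff]
    constructor
    · rintro (h | h)
      · linarith
      · linarith
    · intro h; left; linarith
  have hIτ : ∫ y in Ioi τ, c * y ^ (-a) = c * (τ ^ (1 - a) / (a - 1)) := by
    rw [integral_const_mul, integral_Ioi_rpow_of_lt (by linarith) hτ]
    rw [show -a + 1 = 1 - a by ring]
    congr 1
    rw [div_eq_div_iff (by intro h; apply absurd h; intro h2; linarith [sub_eq_zero.mp h2] : (1:ℝ) - a ≠ 0) (by intro h; linarith [sub_eq_zero.mp h] : a - 1 ≠ 0)]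
    ring
  have hintg : IntegrableOn (fun y : ℝ => c * y ^ (-a)) (Ioi τ) := by
    exact (integrableOn_Ioi_rpow_of_lt (by linarith) hτ).const_mul c
  have hbound : ∫⁻ ω, ENNReal.ofReal (f ω) ∂P
      ≤ ENNReal.ofReal (c * (τ ^ (1 - a) / (a - 1))) := by
    rw [hlay]
    have step1 : ∫⁻ t in Ioi (0:ℝ), P {ω | t < f ω}
        ≤ ∫⁻ t in Ioi (0:ℝ), ENNReal.ofReal (c * (τ + t) ^ (-a)) := by
      apply setLIntegral_mono' measurableSet_Ioi
      intro t ht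
      rw [hsetfeq t ht]
      have := htail (τ + t) (by linarith [mem_Ioi.mp ht])
      calc P {ω | τ + t < M ω}
          = ENNReal.ofReal ((P {ω | τ + t < M ω}).toReal) := by
            rw [ENNReal.ofReal_toReal (measure_ne_top _ _)]
        _ ≤ ENNReal.ofReal (c * (τ + t) ^ (-a)) := ENNReal.ofReal_le_ofReal this
    refine step1.trans ?_
    -- shift: ∫⁻ t in Ioi 0, g (τ + t) = ∫⁻ y in Ioi τ, g y
    have hshift : ∫⁻ t in Ioi (0:ℝ), ENNReal.ofReal (c * (τ + t) ^ (-a))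
        = ∫⁻ y in Ioi τ, ENNReal.ofReal (c * y ^ (-a)) := by
      rw [← lintegral_indicator measurableSet_Ioi, ← lintegral_indicator measurableSet_Ioi]
      rw [← lintegral_add_left_eq_self
        (fun y => (Ioi τ).indicator (fun y => ENNReal.ofReal (c * y ^ (-a))) y) τ]
      congr 1; ext t
      by_cases ht : 0 < t
      · rw [indicator_of_mem (mem_Ioi.mpr ht),
          indicator_of_mem (mem_Ioi.mpr (by linarith : τ < τ + t))]
      · push_neg at ht
        have h1 : t ∉ Ioi (0:ℝ) := by simpa using ht
        have h2 : τ + t ∉ Ioi τ := by simp; linarith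
        rw [indicator_of_notMem h1, indicator_of_notMem h2]
    rw [hshift, ← ofReal_integral_eq_lintegral_ofReal hintg]
    · exact le_of_eq (by rw [hIτ])
    · filter_upwards [self_mem_ae_restrict measurableSet_Ioi] with y hy
      exact mul_nonneg hc.le (Real.rpow_nonneg (le_of_lt (hτ.trans (mem_Ioi.mp hy))) _)
  -- f is integrable
  have hfint : Integrable f P := by
    refine ⟨hfm.aestronglyMeasurable, ?_⟩
    rw [hasFiniteIntegral_iff_ofReal (ae_of_all _ hfnn)]
    exact lt_of_le_of_lt hbound ENNReal.ofReal_lt_top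
  have hfint_val : ∫ ω, f ω ∂P ≤ c * (τ ^ (1 - a) / (a - 1)) := by
    rw [integral_eq_lintegral_of_nonneg_ae (ae_of_all _ hfnn) hfm.aestronglyMeasurable]
    calc (∫⁻ ω, ENNReal.ofReal (f ω) ∂P).toReal
        ≤ (ENNReal.ofReal (c * (τ ^ (1 - a) / (a - 1)))).toReal :=
          ENNReal.toReal_mono ENNReal.ofReal_ne_top hbound
      _ ≤ c * (τ ^ (1 - a) / (a - 1)) := le_of_eq (ENNReal.toReal_ofReal
          (mul_nonneg hc.le (div_nonneg (Real.rpow_nonneg hτ.le _) (by linarith))))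
  -- main bound
  have ht : MeasurableSet {ω | τ < M ω} := measurableSet_lt measurable_const hM
  have habs : |∫ ω in {ω | τ < M ω}, Z ω ∂P| ≤ ∫ ω in {ω | τ < M ω}, |Z ω| ∂P := by
    simpa using norm_integral_le_integral_norm (μ := P.restrict {ω | τ < M ω}) Z
  have hgint : Integrable (fun ω => τ + f ω) P := (integrable_const τ).add hfint
  have hmono : ∫ ω in {ω | τ < M ω}, |Z ω| ∂P
      ≤ ∫ ω in {ω | τ < M ω}, (τ + f ω) ∂P := by
    apply setIntegral_mono_on (hint1.abs.restrict) hgint.restrict ht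
    intro ω _
    have hle : M ω - τ ≤ f ω := le_max_left _ _
    linarith [hZM ω]
  have hcalc : ∫ ω in {ω | τ < M ω}, (τ + f ω) ∂P
      ≤ c * τ ^ (1 - a) + c * (τ ^ (1 - a) / (a - 1)) := by
    rw [integral_add (integrable_const τ).restrict hfint.restrict]
    have e1 : ∫ _ω in {ω | τ < M ω}, τ ∂P = (P {ω | τ < M ω}).toReal * τ := by
      simp [integral_const, smul_eq_mul, measureReal_def]
    rw [e1]
    have b1 : (P {ω | τ < M ω}).toReal * τ ≤ c * τ ^ (1 - a) := by
      calc (P {ω | τ < M ω}).toReal * τ ≤ (c * τ ^ (-a)) * τ :=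
          mul_le_mul_of_nonneg_right (htail τ hτ) hτ.le
        _ = c * τ ^ (1 - a) := by
          rw [mul_assoc, ← Real.rpow_add_one hτ.ne' (-a)]
          ring_nf
    have b2 : ∫ ω in {ω | τ < M ω}, f ω ∂P ≤ c * (τ ^ (1 - a) / (a - 1)) := by
      refine le_trans ?_ hfint_val
      exact setIntegral_le_integral hfint (ae_of_all _ hfnn)
    linarith
  calc |∫ ω in {ω | τ < M ω}, Z ω ∂P| ≤ _ := habs
    _ ≤ _ := hmono
    _ ≤ c * τ ^ (1 - a) + c * (τ ^ (1 - a) / (a - 1)) := hcalc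
    _ = (c + c / (a - 1)) * τ ^ (1 - a) := by ring

/-- **Moments of the truncated displacement.**
Let `Z = Y_{ξ̄,U}` be the displacement of a uniform child of a size-biased vertex and
`M = max_{1≤i≤ξ̄}|Y_{ξ̄,i}|` (so `|Z| ≤ M`).  Assume the global centering `E[Z] = 0`,
the global variance `E[Z²] = β² < ∞` and the tail bound
`P(M > y) ≤ c·y^{−2(4−η)/3}` for all `y > 0`, with `η ∈ [0,2)`.
Fix `δ ∈ (0, 1/(4−η))` and set `τₙ = n^{1/(4−η)−δ}`.  Then for the truncation
`Zₙ = Z·1{M ≤ τₙ}`: `|E[Zₙ]| = O(τₙ^{1 − 2(4−η)/3})` and `Var(Zₙ) → β²`. -/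
theorem stmt14 {Ω : Type*} [MeasurableSpace Ω] (P : Measure Ω) [IsProbabilityMeasure P]
    (Z M : Ω → ℝ) (hZ : Measurable Z) (hM : Measurable M)
    (hZM : ∀ ω, |Z ω| ≤ M ω)
    (hint1 : Integrable Z P) (hcenter : ∫ ω, Z ω ∂P = 0)
    (hint2 : Integrable (fun ω => Z ω ^ 2) P) (β : ℝ) (hβ : ∫ ω, Z ω ^ 2 ∂P = β ^ 2)
    (η : ℝ) (hη0 : 0 ≤ η) (hη2 : η < 2)
    (c : ℝ) (hc : 0 < c)
    (htail : ∀ y : ℝ, 0 < y → (P {ω | y < M ω}).toReal ≤ c * y ^ (-(2 * (4 - η) / 3)))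
    (δ : ℝ) (hδ0 : 0 < δ) (hδ1 : δ < 1 / (4 - η)) :
    (∃ C : ℝ, 0 < C ∧ ∀ n : ℕ, 1 ≤ n →
      |∫ ω in {ω | M ω ≤ (n : ℝ) ^ (1 / (4 - η) - δ)}, Z ω ∂P|
        ≤ C * ((n : ℝ) ^ (1 / (4 - η) - δ)) ^ (1 - 2 * (4 - η) / 3)) ∧
    Tendsto (fun n : ℕ =>
        (∫ ω in {ω | M ω ≤ (n : ℝ) ^ (1 / (4 - η) - δ)}, Z ω ^ 2 ∂P)
          - (∫ ω in {ω | M ω ≤ (n : ℝ) ^ (1 / (4 - η) - δ)}, Z ω ∂P) ^ 2)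
      atTop (nhds (β ^ 2)) := by
  have h4η : (0:ℝ) < 4 - η := by linarith
  have hp : 0 < 1 / (4 - η) - δ := by linarith
  have ha : 1 < 2 * (4 - η) / 3 := by
    rw [lt_div_iff₀ (by norm_num : (0:ℝ) < 3)]; linarith
  set p : ℝ := 1 / (4 - η) - δ with hpdef
  set a : ℝ := 2 * (4 - η) / 3 with hadef
  have hτpos : ∀ n : ℕ, 1 ≤ n → (0:ℝ) < (n:ℝ) ^ p := by
    intro n hn
    exact Real.rpow_pos_of_pos (by exact_mod_cast Nat.lt_of_lt_of_le Nat.zero_lt_one hn) p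
  constructor
  · have haux : 0 < c + c / (a - 1) := by
      have h1 : 0 < a - 1 := by linarith
      positivity
    refine ⟨c + c / (a - 1), haux, fun n hn => ?_⟩
    exact key_s14 P Z M hZ hM hZM hint1 hcenter c hc a ha htail _ (hτpos n hn)
  · -- convergence of truncated moments
    have hτtend : Tendsto (fun n : ℕ => (n:ℝ) ^ p) atTop atTop :=
      (tendsto_rpow_atTop hp).comp tendsto_natCast_atTop_atTop
    have hsm : ∀ n : ℕ, MeasurableSet {ω | M ω ≤ (n:ℝ) ^ p} :=
      fun n => measurableSet_le hM measurable_const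
    have conv : ∀ g : Ω → ℝ, Measurable g → Integrable g P →
        Tendsto (fun n : ℕ => ∫ ω in {ω | M ω ≤ (n:ℝ) ^ p}, g ω ∂P) atTop
          (nhds (∫ ω, g ω ∂P)) := by
      intro g hg hgint
      have heq : ∀ n : ℕ, ∫ ω in {ω | M ω ≤ (n:ℝ) ^ p}, g ω ∂P
          = ∫ ω, ({ω | M ω ≤ (n:ℝ) ^ p}).indicator g ω ∂P := by
        intro n; rw [integral_indicator (hsm n)]
      simp only [heq]
      apply tendsto_integral_of_dominated_convergence (fun ω => |g ω|)
      · exact fun n => ((hg.indicator (hsm n))).aestronglyMeasurable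
      · exact hgint.abs
      · intro n
        filter_upwards with ω
        rw [Real.norm_eq_abs, ← Real.norm_eq_abs, ← Real.norm_eq_abs]
        exact norm_indicator_le_norm_self g ω
      · filter_upwards with ω
        apply tendsto_const_nhds.congr'
        filter_upwards [hτtend.eventually_ge_atTop (M ω)] with n hn
        exact (indicator_of_mem (by exact hn) g).symm
    have h1 : Tendsto (fun n : ℕ => ∫ ω in {ω | M ω ≤ (n:ℝ) ^ p}, Z ω ∂P) atTop
        (nhds 0) := by
      simpa [hcenter] using conv Z hZ hint1
    have h2 : Tendsto (fun n : ℕ => ∫ ω in {ω | M ω ≤ (n:ℝ) ^ p}, Z ω ^ 2 ∂P) atTop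
        (nhds (β ^ 2)) := by
      simpa [hβ] using conv (fun ω => Z ω ^ 2) (hZ.pow_const 2) hint2
    simpa using h2.sub (h1.pow 2)
end

section
/- Fix n, r, s ∈ ℤ_{≥0} with r, s < n and d₁,…,d_r ∈ ℕ with Σᵢdᵢ = s. Let μ be a distribution on ℤ_{≥0} with finite positive mean, let X_{r+1},…,Xₙ be i.i.d. μ, set Z⃗ = (d₁,…,d_r,X_{r+1},…,Xₙ), and conditionally on Z⃗ let Σ be the size-biased random reordering permutation of Z⃗. Let N = |{i ∈ {r+1,…,n} : Xᵢ > 0}| and τ_r(Σ) = min{j : Σ(j) ∈ [r]} (or n+1 if r = 0). Let X̄₁, X̄₂, … be i.i.d. samples from the size-biased law of μ. Then for any m ∈ [n−r] and any f : ℕᵐ → ℝ, provided P(X_{r+1}+…+Xₙ = n−1−s) > 0: E[f(Z_{Σ(1)},…,Z_{Σ(m)})·1{N ≥ m}·1{τ_r(Σ) > m} | X_{r+1}+…+Xₙ = n−1−s] = E[f(X̄₁,…,X̄ₘ)·Θ(X̄₁,…,X̄ₘ)], where Θ(k₁,…,kₘ) = [P(X_{m+1}+…+X_{n−r} = n−1−s−Σᵢkᵢ)/P(X₁+…+X_{n−r}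 = n−1−s)]·(E[X₁])ᵐ·∏_{i=1}^{m}(n−r−i+1)/(n−1−Σ_{j<i}k_j) when Σᵢkᵢ ≤ n−1−s, and Θ = 0 otherwise. -/
noncomputable section
open Classical Finset

namespace SB16

/-- Sequential size-biased product with global denominator. -/
def Qr (S : ℝ) (g : ℕ → ℝ) (l : ℕ) : ℝ :=
  ∏ i ∈ Finset.range l, g i / (S - ∑ j ∈ Finset.range i, g j)

lemma Qr_congr {S : ℝ} {g g' : ℕ → ℝ} {l : ℕ} (h : ∀ i < l, g i = g' i) :
    Qr S g l = Qr S g' l := by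
  unfold Qr
  refine Finset.prod_congr rfl fun i hi => ?_
  have hi' := Finset.mem_range.1 hi
  rw [h i hi']
  congr 1
  refine congrArg _ (Finset.sum_congr rfl fun j hj => ?_)
  exact h j (lt_trans (Finset.mem_range.1 hj) hi')

lemma Qr_succ (S : ℝ) (g : ℕ → ℝ) (l : ℕ) :
    Qr S g (l + 1) = Qr S g l * (g l / (S - ∑ j ∈ Finset.range l, g j)) := by
  unfold Qr; rw [Finset.prod_range_succ]

lemma Qr_zero (S : ℝ) (g : ℕ → ℝ) (l : ℕ) {i : ℕ} (hi : i < l) (h : g i = 0) :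
    Qr S g l = 0 := by
  unfold Qr
  exact Finset.prod_eq_zero (Finset.mem_range.2 hi) (by rw [h, zero_div])

lemma sum_range_dite {M : Type*} [AddCommMonoid M] (m : ℕ) (c : Fin m → M) :
    ∑ j ∈ Finset.range m, (if h : j < m then c ⟨j, h⟩ else 0) = ∑ t : Fin m, c t := by
  rw [← Fin.sum_univ_eq_sum_range (fun j => if h : j < m then c ⟨j, h⟩ else 0) m]
  exact Finset.sum_congr rfl fun t _ => by simp [t.isLt]

lemma prod_range_dite {M : Type*} [CommMonoid M] (m : ℕ) (c : Fin m → M) :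
    ∏ j ∈ Finset.range m, (if h : j < m then c ⟨j, h⟩ else 1) = ∏ t : Fin m, c t := by
  rw [← Fin.prod_univ_eq_prod_range (fun j => if h : j < m then c ⟨j, h⟩ else 1) m]
  exact Finset.prod_congr rfl fun t _ => by simp [t.isLt]

/-- snoc of an injective map with a fresh point is injective. -/
lemma snoc_inj {γ : Type*} {m : ℕ} (v : Fin m → γ) (hv : Function.Injective v)
    (a : γ) (ha : ∀ t, v t ≠ a) :
    Function.Injective (Fin.snoc v a : Fin (m+1) → γ) := by
  intro i j hij
  induction i using Fin.lastCases with
  | last =>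
    induction j using Fin.lastCases with
    | last => rfl
    | cast j =>
      rw [Fin.snoc_last, Fin.snoc_castSucc] at hij
      exact absurd hij.symm (ha j)
  | cast i =>
    induction j using Fin.lastCases with
    | last =>
      rw [Fin.snoc_last, Fin.snoc_castSucc] at hij
      exact absurd hij (ha i)
    | cast j =>
      rw [Fin.snoc_castSucc, Fin.snoc_castSucc] at hij
      exact congrArg Fin.castSucc (hv hij)

/-- Peeling the last coordinate off a sum over embeddings. -/
lemma peel {γ : Type*} [Fintype γ] [DecidableEq γ] (m : ℕ)
    (F : (Fin (m+1) → γ) → ℝ) :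
    ∑ w : Fin (m+1) ↪ γ, F ⇑w
      = ∑ v : Fin m ↪ γ, ∑ a ∈ (Finset.univ.image ⇑v)ᶜ, F (Fin.snoc ⇑v a) := by
  have hrw : ∀ v : Fin m ↪ γ, ∑ a ∈ (Finset.univ.image ⇑v)ᶜ, F (Fin.snoc ⇑v a)
      = ∑ a : γ, if a ∈ (Finset.univ.image ⇑v)ᶜ then F (Fin.snoc ⇑v a) else 0 := by
    intro v
    rw [Finset.sum_ite_mem, Finset.univ_inter]
  simp_rw [hrw]
  rw [← Finset.sum_product']
  rw [Finset.sum_ite, Finset.sum_const_zero, add_zero]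
  set t := (Finset.univ ×ˢ Finset.univ).filter
      (fun p : (Fin m ↪ γ) × γ => p.2 ∈ (Finset.univ.image ⇑p.1)ᶜ) with ht
  have hres : ∀ (v : Fin m ↪ γ) (a : γ), (v, a) ∈ t → ∀ s, v s ≠ a := by
    intro v a hva s hs
    rw [ht, Finset.mem_filter] at hva
    exact (Finset.mem_compl.1 hva.2) (Finset.mem_image.2 ⟨s, Finset.mem_univ s, hs⟩)
  refine Finset.sum_bij'
    (i := fun (w : Fin (m+1) ↪ γ) (_ : w ∈ Finset.univ) =>
      ((⟨⇑w ∘ Fin.castSucc, fun i j hij => Fin.castSucc_injective m (w.injective hij)⟩ :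
          Fin m ↪ γ), w (Fin.last m)))
    (j := fun p hp => ⟨Fin.snoc ⇑p.1 p.2, snoc_inj _ p.1.injective _ (hres p.1 p.2 hp)⟩)
    (fun w _ => ?_) (fun p hp => Finset.mem_univ _) (fun w _ => ?_) (fun p hp => ?_)
    (fun w _ => ?_)
  · rw [ht, Finset.mem_filter]
    refine ⟨Finset.mem_product.2 ⟨Finset.mem_univ _, Finset.mem_univ _⟩, ?_⟩
    rw [Finset.mem_compl]
    rintro hmem
    obtain ⟨s, -, hs⟩ := Finset.mem_image.1 hmem
    simp only [Function.Embedding.coeFn_mk, Function.comp_apply] at hs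
    have := w.injective hs
    have : (s.castSucc : Fin (m+1)) = Fin.last m := this
    exact absurd (congrArg Fin.val this) (by simp; omega)
  · apply Function.Embedding.ext
    intro i
    simp only [Function.Embedding.coeFn_mk]
    induction i using Fin.lastCases with
    | last => simp
    | cast i => simp; rfl
  · apply Prod.ext
    · apply Function.Embedding.ext
      intro s
      simp
    · simp
  · apply congrArg
    funext i
    simp only [Function.Embedding.coeFn_mk]
    induction i using Fin.lastCases with
    | last => simp
    | cast i => simp; rfl


/-- Counting: summing a function of the first `k` values of a permutation. -/
lemma perm_sum (n : ℕ) : ∀ (d k : ℕ) (hk : k + d = n) (h : (Fin k → Fin n) → ℝ),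
    ∑ σ : Equiv.Perm (Fin n), h (fun t => σ (Fin.castLE (by omega) t))
      = ((n - k).factorial : ℝ) * ∑ w : Fin k ↪ Fin n, h ⇑w := by
  intro d
  induction d with
  | zero =>
    intro k hk h
    obtain rfl : k = n := by omega
    have hbij : Function.Bijective (fun σ : Equiv.Perm (Fin k) => σ.toEmbedding) := by
      constructor
      · intro σ τ hστ
        simp only at hστ
        exact Equiv.ext fun i => congrArg (fun e : Fin k ↪ Fin k => e i) hστ
      · intro w
        exact ⟨w.equivOfFiniteSelfEmbedding, w.toEmbedding_equivOfFiniteSelfEmbedding⟩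
    rw [Fintype.sum_bijective _ hbij _ (fun w => h ⇑w) (fun σ => by
      apply congrArg; funext t; exact congrArg σ (Fin.ext rfl))]
    simp
  | succ d ih =>
    intro k hk h
    have hkn : k + 1 + d = n := by omega
    have step := ih (k + 1) hkn (fun w => h (w ∘ Fin.castSucc))
    have hcomp : ∀ σ : Equiv.Perm (Fin n),
        h (fun t => σ (Fin.castLE (by omega) t))
          = h ((fun t => σ (Fin.castLE (by omega) t)) ∘ Fin.castSucc) := by
      intro σ
      apply congrArg
      funext t
      apply congrArg
      exact Fin.ext rfl
    calc ∑ σ : Equiv.Perm (Fin n), h (fun t => σ (Fin.castLE (by omega) t))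
        = ∑ σ : Equiv.Perm (Fin n),
            (fun w => h (w ∘ Fin.castSucc)) (fun t => σ (Fin.castLE (by omega) t)) := by
          exact Finset.sum_congr rfl fun σ _ => hcomp σ
      _ = ((n - (k+1)).factorial : ℝ) * ∑ w : Fin (k+1) ↪ Fin n, h (⇑w ∘ Fin.castSucc) := step
      _ = ((n - k).factorial : ℝ) * ∑ w : Fin k ↪ Fin n, h ⇑w := by
          rw [peel k (fun w => h (w ∘ Fin.castSucc))]
          have hsnoc : ∀ (v : Fin k ↪ Fin n) (a : Fin n),
              (Fin.snoc ⇑v a ∘ Fin.castSucc : Fin k → Fin n) = ⇑v := by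
            intro v a; funext t; simp
          have hcard : ∀ v : Fin k ↪ Fin n, ((Finset.univ.image ⇑v)ᶜ).card = n - k := by
            intro v
            rw [Finset.card_compl, Finset.card_image_of_injective _ v.injective]
            simp
          have : ∀ v : Fin k ↪ Fin n,
              ∑ a ∈ (Finset.univ.image ⇑v)ᶜ, h (Fin.snoc ⇑v a ∘ Fin.castSucc)
                = (n - k : ℕ) * h ⇑v := by
            intro v
            rw [Finset.sum_congr rfl (fun a _ => by rw [hsnoc v a])]
            rw [Finset.sum_const, hcard v, nsmul_eq_mul]
          rw [Finset.sum_congr rfl (fun v _ => this v), ← Finset.mul_sum]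
          rw [← mul_assoc]
          congr 1
          have h1 : n - k = (n - (k+1)) + 1 := by omega
          rw [h1, Nat.factorial_succ]
          push_cast
          ring

/-- Core marginalization: the size-biased reordering sum over permutations,
with global-denominator weights, reduces to a sum over embeddings of length `m`. -/
lemma claim (n : ℕ) (z : Fin n → ℕ) (N : ℕ)
    (hN : N = (Finset.univ.filter fun a : Fin n => 0 < z a).card)
    (hNn : N ≤ n) (S : ℝ) (hS : S = ∑ a : Fin n, (z a : ℝ)) :
    ∀ (d m : ℕ) (hm : m + d = N) (g : (Fin m → Fin n) → ℝ),
    ∑ σ : Equiv.Perm (Fin n),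
      (1 / ((n - N).factorial : ℝ)) *
        Qr S (fun i => if h : i < N then (z (σ (Fin.castLE hNn ⟨i, h⟩)) : ℝ) else 0) N *
        g (fun t => σ (Fin.castLE (show m ≤ n by omega) t))
    = ∑ w : Fin m ↪ Fin n,
        Qr S (fun i => if h : i < m then (z (w ⟨i, h⟩) : ℝ) else 0) m * g ⇑w := by
  intro d
  induction d with
  | zero =>
    intro m hm g
    obtain rfl : m = N := by omega
    have := perm_sum n (n - m) m (by omega)
      (fun w => (1 / ((n - m).factorial : ℝ)) *
        Qr S (fun i => if h : i < m then (z (w ⟨i, h⟩) : ℝ) else 0) m * g w)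
    rw [this, Finset.mul_sum]
    refine Finset.sum_congr rfl fun w _ => ?_
    have hfac : ((n - m).factorial : ℝ) ≠ 0 := Nat.cast_ne_zero.2 (Nat.factorial_ne_zero _)
    field_simp
  | succ d ih =>
    intro m hm g
    have hmn : m + 1 ≤ n := by omega
    have hstep := ih (m + 1) (by omega) (fun w => g (w ∘ Fin.castSucc))
    have hgσ : ∀ σ : Equiv.Perm (Fin n),
        g (fun t => σ (Fin.castLE (show m ≤ n by omega) t))
          = g ((fun t => σ (Fin.castLE (show m + 1 ≤ n by omega) t)) ∘ Fin.castSucc) := by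
      intro σ
      apply congrArg
      funext t
      exact congrArg σ (Fin.ext rfl)
    calc ∑ σ : Equiv.Perm (Fin n),
          (1 / ((n - N).factorial : ℝ)) *
            Qr S (fun i => if h : i < N then (z (σ (Fin.castLE hNn ⟨i, h⟩)) : ℝ) else 0) N *
            g (fun t => σ (Fin.castLE (show m ≤ n by omega) t))
        = ∑ σ : Equiv.Perm (Fin n),
          (1 / ((n - N).factorial : ℝ)) *
            Qr S (fun i => if h : i < N then (z (σ (Fin.castLE hNn ⟨i, h⟩)) : ℝ) else 0) N *
            (fun w => g (w ∘ Fin.castSucc)) (fun t => σ (Fin.castLE (show m + 1 ≤ n by omega) t)) := by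
          exact Finset.sum_congr rfl fun σ _ => by rw [hgσ σ]
      _ = ∑ w : Fin (m+1) ↪ Fin n,
            Qr S (fun i => if h : i < m + 1 then (z (w ⟨i, h⟩) : ℝ) else 0) (m+1) *
              g (⇑w ∘ Fin.castSucc) := hstep
      _ = ∑ v : Fin m ↪ Fin n,
            Qr S (fun i => if h : i < m then (z (v ⟨i, h⟩) : ℝ) else 0) m * g ⇑v := by
          rw [peel m (fun w : Fin (m+1) → Fin n =>
            Qr S (fun i => if h : i < m + 1 then (z (w ⟨i, h⟩) : ℝ) else 0) (m+1) *
              g (w ∘ Fin.castSucc))]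
          refine Finset.sum_congr rfl fun v _ => ?_
          set Dv : ℝ := S - ∑ t : Fin m, (z (v t) : ℝ) with hDv
          have hsum_im : ∑ a ∈ Finset.univ.image ⇑v, (z a : ℝ) = ∑ t : Fin m, (z (v t) : ℝ) := by
            rw [Finset.sum_image (fun a _ b _ hab => v.injective hab)]
          have hDcompl : ∑ a ∈ (Finset.univ.image ⇑v)ᶜ, (z a : ℝ) = Dv := by
            have := Finset.sum_add_sum_compl (Finset.univ.image ⇑v) (fun a => (z a : ℝ))
            rw [hDv, hS, ← this, hsum_im]
            ring
          have hD : Dv ≠ 0 := by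
            intro h0
            have hall : ∀ a ∈ (Finset.univ.image ⇑v)ᶜ, z a = 0 := by
              intro a ha
              have hnn : ∀ a ∈ (Finset.univ.image ⇑v)ᶜ, (0:ℝ) ≤ (z a : ℝ) := by
                intro a _; positivity
              have := (Finset.sum_eq_zero_iff_of_nonneg hnn).1 (by rw [hDcompl, h0]) a ha
              exact_mod_cast this
            have hsub : (Finset.univ.filter fun a : Fin n => 0 < z a) ⊆ Finset.univ.image ⇑v := by
              intro a ha
              rw [Finset.mem_filter] at ha
              by_contra hmem
              have : z a = 0 := hall a (Finset.mem_compl.2 hmem)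
              omega
            have hcard := Finset.card_le_card hsub
            rw [← hN, Finset.card_image_of_injective _ v.injective, Finset.card_univ,
              Fintype.card_fin] at hcard
            omega
          have hden : ∀ a, ∑ j ∈ Finset.range m,
              (fun i => if h : i < m + 1 then (z ((Fin.snoc ⇑v a : Fin (m+1) → Fin n) ⟨i, h⟩) : ℝ) else 0) j
                = ∑ t : Fin m, (z (v t) : ℝ) := by
            intro a
            rw [Finset.sum_congr rfl (fun j hj => ?_), sum_range_dite m (fun t => (z (v t) : ℝ))]
            have hjm := Finset.mem_range.1 hj
            beta_reduce
            rw [dif_pos (by omega : j < m + 1), dif_pos hjm]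
            congr 2
            have : (⟨j, by omega⟩ : Fin (m+1)) = Fin.castSucc ⟨j, hjm⟩ := Fin.ext rfl
            rw [this, Fin.snoc_castSucc]
          have hQ : ∀ a, Qr S (fun i => if h : i < m + 1 then
                (z ((Fin.snoc ⇑v a : Fin (m+1) → Fin n) ⟨i, h⟩) : ℝ) else 0) (m+1)
              = Qr S (fun i => if h : i < m then (z (v ⟨i, h⟩) : ℝ) else 0) m * ((z a : ℝ) / Dv) := by
            intro a
            rw [Qr_succ]
            congr 1
            · refine Qr_congr fun i hi => ?_
              rw [dif_pos (by omega : i < m + 1), dif_pos hi]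
              congr 2
              have : (⟨i, by omega⟩ : Fin (m+1)) = Fin.castSucc ⟨i, hi⟩ := Fin.ext rfl
              rw [this, Fin.snoc_castSucc]
            · rw [hden a, dif_pos (by omega : m < m + 1)]
              have : (⟨m, by omega⟩ : Fin (m+1)) = Fin.last m := Fin.ext rfl
              rw [this, Fin.snoc_last, ← hDv]
          have hg : ∀ a, ((Fin.snoc ⇑v a : Fin (m+1) → Fin n) ∘ Fin.castSucc) = ⇑v := by
            intro a; funext t; simp
          calc ∑ a ∈ (Finset.univ.image ⇑v)ᶜ,
                Qr S (fun i => if h : i < m + 1 then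
                  (z ((Fin.snoc ⇑v a : Fin (m+1) → Fin n) ⟨i, h⟩) : ℝ) else 0) (m+1) *
                  g ((Fin.snoc ⇑v a : Fin (m+1) → Fin n) ∘ Fin.castSucc)
              = ∑ a ∈ (Finset.univ.image ⇑v)ᶜ,
                  Qr S (fun i => if h : i < m then (z (v ⟨i, h⟩) : ℝ) else 0) m * g ⇑v *
                    ((z a : ℝ) / Dv) := by
                refine Finset.sum_congr rfl fun a _ => ?_
                rw [hQ a, hg a]
                ring
            _ = Qr S (fun i => if h : i < m then (z (v ⟨i, h⟩) : ℝ) else 0) m * g ⇑v := by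
                rw [← Finset.mul_sum, ← Finset.sum_div, hDcompl, div_self hD, mul_one]

/-- Converting running-tail denominators into global-sum denominators. -/
lemma icoP (n : ℕ) (z : Fin n → ℕ) (N : ℕ)
    (hN : N = (Finset.univ.filter fun a : Fin n => 0 < z a).card)
    (S : ℝ) (hS : S = ∑ a : Fin n, (z a : ℝ))
    (w : Fin N → Fin n) (hw : Function.Injective w) :
    ∏ i ∈ Finset.range N,
        (if h : i < N then (z (w ⟨i, h⟩) : ℝ) else 0) /
          (∑ j ∈ Finset.Ico i N, (if h : j < N then (z (w ⟨j, h⟩) : ℝ) else 0))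
      = Qr S (fun i => if h : i < N then (z (w ⟨i, h⟩) : ℝ) else 0) N := by
  set G : ℕ → ℝ := fun i => if h : i < N then (z (w ⟨i, h⟩) : ℝ) else 0 with hG
  by_cases hpos : ∀ t : Fin N, 0 < z (w t)
  · have himage : Finset.univ.image w = Finset.univ.filter fun a : Fin n => 0 < z a := by
      apply Finset.eq_of_subset_of_card_le
      · intro a ha
        obtain ⟨t, -, rfl⟩ := Finset.mem_image.1 ha
        exact Finset.mem_filter.2 ⟨Finset.mem_univ _, hpos t⟩
      · rw [← hN, Finset.card_image_of_injective _ hw, Finset.card_univ, Fintype.card_fin]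
    have htot : ∑ j ∈ Finset.range N, G j = S := by
      rw [hG, sum_range_dite N (fun t => (z (w t) : ℝ))]
      have h1 : ∑ a ∈ Finset.univ.image w, (z a : ℝ) = ∑ t : Fin N, (z (w t) : ℝ) :=
        Finset.sum_image (fun a _ b _ hab => hw hab)
      rw [← h1, himage, hS]
      rw [← Finset.sum_filter_add_sum_filter_not Finset.univ (fun a : Fin n => 0 < z a)
        (fun a => (z a : ℝ))]
      have : ∑ a ∈ Finset.univ.filter (fun a : Fin n => ¬ 0 < z a), (z a : ℝ) = 0 := by
        refine Finset.sum_eq_zero fun a ha => ?_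
        have := (Finset.mem_filter.1 ha).2
        have : z a = 0 := by omega
        rw [this]; norm_num
      rw [this, add_zero]
    unfold Qr
    refine Finset.prod_congr rfl fun i hi => ?_
    have hiN := Finset.mem_range.1 hi
    congr 1
    rw [Finset.sum_Ico_eq_sub _ (le_of_lt hiN), htot]
  · push_neg at hpos
    obtain ⟨t, ht⟩ := hpos
    have ht0 : z (w t) = 0 := by omega
    have hGt : (if h : (t : ℕ) < N then (z (w ⟨(t : ℕ), h⟩) : ℝ) else 0) = 0 := by
      rw [dif_pos t.isLt, show (⟨(t : ℕ), t.isLt⟩ : Fin N) = t from Fin.ext rfl, ht0]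
      norm_num
    rw [Qr_zero S _ N t.isLt (show (fun i => if h : i < N then (z (w ⟨i, h⟩) : ℝ) else 0) (t : ℕ) = 0 from hGt)]
    exact Finset.prod_eq_zero (Finset.mem_range.2 t.isLt) (by rw [hGt, zero_div])

/-- The first-passage-time indicator only depends on the first `m` positions. -/
lemma tauP (n r m : ℕ) (hrn : r < n) (hmn : m ≤ n) (σ : Equiv.Perm (Fin n)) :
    (if m < (if r = 0 then n + 1 else
        sInf {j : ℕ | (fun i => if h : i < n then ((σ ⟨i, h⟩ : Fin n) : ℕ) else i) j < r} + 1)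
      then (1:ℝ) else 0)
    = (if ∀ t : Fin m, r ≤ ((σ (Fin.castLE hmn t) : Fin n) : ℕ) then 1 else 0) := by
  by_cases hr0 : r = 0
  · subst hr0
    rw [if_pos (fun t : Fin m => Nat.zero_le ((σ (Fin.castLE hmn t) : Fin n) : ℕ)),
      if_pos]
    split
    · omega
    · omega
  · rw [show (if r = 0 then n + 1 else
        sInf {j : ℕ | (fun i => if h : i < n then ((σ ⟨i, h⟩ : Fin n) : ℕ) else i) j < r} + 1)
      = sInf {j : ℕ | (fun i => if h : i < n then ((σ ⟨i, h⟩ : Fin n) : ℕ) else i) j < r} + 1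
      from if_neg hr0]
    set A := {j : ℕ | (fun i => if h : i < n then ((σ ⟨i, h⟩ : Fin n) : ℕ) else i) j < r} with hA
    have hne : A.Nonempty := by
      refine ⟨↑(σ.symm ⟨0, by omega⟩), ?_⟩
      rw [hA, Set.mem_setOf_eq]
      beta_reduce
      rw [dif_pos (Fin.isLt _)]
      rw [show (⟨↑(σ.symm ⟨0, by omega⟩), Fin.isLt _⟩ : Fin n) = σ.symm ⟨0, by omega⟩ from
        Fin.ext rfl]
      rw [Equiv.apply_symm_apply]
      show (0:ℕ) < r
      omega
    have hiff : (m < sInf A + 1) ↔ (∀ t : Fin m, r ≤ ((σ (Fin.castLE hmn t) : Fin n) : ℕ)) := by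
      constructor
      · intro h t
        by_contra hc
        push_neg at hc
        have htA : (↑t : ℕ) ∈ A := by
          rw [hA, Set.mem_setOf_eq]
          beta_reduce
          rw [dif_pos (by omega : (↑t : ℕ) < n)]
          rw [show (⟨(↑t : ℕ), by omega⟩ : Fin n) = Fin.castLE hmn t from Fin.ext rfl]
          exact hc
        have := Nat.sInf_le htA
        have := t.isLt
        omega
      · intro h
        have hmem := Nat.sInf_mem hne
        have hmem' : (if hh : sInf A < n then ((σ ⟨sInf A, hh⟩ : Fin n) : ℕ) else sInf A) < r :=
          hmem
        by_contra hc
        push_neg at hc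
        have hlt : sInf A < m := by omega
        rw [dif_pos (show sInf A < n by omega)] at hmem'
        have h2 := h ⟨sInf A, hlt⟩
        rw [show Fin.castLE hmn ⟨sInf A, hlt⟩ = (⟨sInf A, show sInf A < n by omega⟩ : Fin n) from
          Fin.ext rfl] at h2
        omega
    exact if_congr hiff rfl rfl

/-- Shift an embedding into the tail block down by `r`. -/
def downE (n r m : ℕ) (w : Fin m ↪ Fin n) (hw : ∀ t, r ≤ ((w t : Fin n) : ℕ)) :
    Fin m ↪ Fin (n - r) where
  toFun t := ⟨(w t : ℕ) - r, by have h1 := (w t).isLt; have h2 := hw t; omega⟩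
  inj' := by
    intro t t' h
    rw [Fin.mk.injEq] at h
    have h1 := hw t
    have h2 := hw t'
    exact w.injective (Fin.ext (by omega))

lemma downE_val (n r m : ℕ) (w : Fin m ↪ Fin n) (hw : ∀ t, r ≤ ((w t : Fin n) : ℕ))
    (t : Fin m) : ((downE n r m w hw t : Fin (n - r)) : ℕ) = (w t : ℕ) - r := rfl

/-- Shift an embedding into `Fin (n-r)` up by `r`. -/
def upE (n r m : ℕ) (hr : r ≤ n) (u : Fin m ↪ Fin (n - r)) : Fin m ↪ Fin n where
  toFun t := ⟨r + (u t : ℕ), by have := (u t).isLt; omega⟩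
  inj' := by
    intro t t' h
    rw [Fin.mk.injEq] at h
    exact u.injective (Fin.ext (by omega))

lemma upE_val (n r m : ℕ) (hr : r ≤ n) (u : Fin m ↪ Fin (n - r)) (t : Fin m) :
    ((upE n r m hr u t : Fin n) : ℕ) = r + (u t : ℕ) := rfl

/-- Restricting the embedding sum to embeddings avoiding the fixed block. -/
lemma restrictP (n r m : ℕ) (hrn : r ≤ n) (hmp : m ≤ n - r) (ζ : Fin n → ℕ)
    (x : Fin (n - r) → ℕ)
    (hzx : ∀ (a : Fin n) (h : r ≤ (a : ℕ)), ζ a = x ⟨(a : ℕ) - r, by omega⟩)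
    (S : ℝ) (f : (Fin m → ℕ) → ℝ) :
    ∑ w : Fin m ↪ Fin n,
        Qr S (fun i => if h : i < m then (ζ (w ⟨i, h⟩) : ℝ) else 0) m *
          ((if ∀ t : Fin m, r ≤ ((w t : Fin n) : ℕ) then (1:ℝ) else 0) *
            f (fun t => ζ (w t)))
      = ∑ u : Fin m ↪ Fin (n - r),
          Qr S (fun i => if h : i < m then (x (u ⟨i, h⟩) : ℝ) else 0) m *
            f (fun t => x (u t)) := by
  have hzero : ∀ w : Fin m ↪ Fin n, w ∈ Finset.univ →
      w ∉ Finset.univ.filter (fun w : Fin m ↪ Fin n => ∀ t : Fin m, r ≤ ((w t : Fin n) : ℕ)) →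
      Qr S (fun i => if h : i < m then (ζ (w ⟨i, h⟩) : ℝ) else 0) m *
        ((if ∀ t : Fin m, r ≤ ((w t : Fin n) : ℕ) then (1:ℝ) else 0) *
          f (fun t => ζ (w t))) = 0 := by
    intro w _ hw
    have hnc : ¬ ∀ t : Fin m, r ≤ ((w t : Fin n) : ℕ) := by
      intro hc
      exact hw (Finset.mem_filter.2 ⟨Finset.mem_univ w, hc⟩)
    rw [if_neg hnc, zero_mul, mul_zero]
  rw [← Finset.sum_subset (Finset.filter_subset _ _) hzero]
  refine Finset.sum_bij'
    (fun w hw => downE n r m w ((Finset.mem_filter.1 hw).2))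
    (fun u _ => upE n r m hrn u)
    (fun w hw => Finset.mem_univ _)
    (fun u hu => Finset.mem_filter.2 ⟨Finset.mem_univ _, fun t => by rw [upE_val]; omega⟩)
    ?_ ?_ ?_
  · intro w hw
    apply Function.Embedding.ext
    intro t
    apply Fin.ext
    rw [upE_val, downE_val]
    have := (Finset.mem_filter.1 hw).2 t
    omega
  · intro u hu
    apply Function.Embedding.ext
    intro t
    apply Fin.ext
    rw [downE_val, upE_val]
    omega
  · intro w hw
    have hcond := (Finset.mem_filter.1 hw).2
    rw [if_pos hcond, one_mul]
    congr 1
    · refine Qr_congr fun i hi => ?_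
      rw [dif_pos hi, dif_pos hi]
      rw [hzx (w ⟨i, hi⟩) (hcond ⟨i, hi⟩)]
      exact congrArg (fun a => ((x a : ℕ) : ℝ)) (Fin.ext rfl)
    · apply congrArg
      funext t
      rw [hzx (w t) (hcond t)]
      exact congrArg x (Fin.ext rfl)

/-- If fewer than `m` coordinates are positive, the embedding sum vanishes. -/
lemma absorbP (p m : ℕ) (x : Fin p → ℕ)
    (hN : ¬ m ≤ (Finset.univ.filter fun i : Fin p => 0 < x i).card)
    (S : ℝ) (f : (Fin m → ℕ) → ℝ) :
    ∑ u : Fin m ↪ Fin p,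
        Qr S (fun i => if h : i < m then (x (u ⟨i, h⟩) : ℝ) else 0) m *
          f (fun t => x (u t)) = 0 := by
  refine Finset.sum_eq_zero fun u _ => ?_
  have : ∃ t : Fin m, x (u t) = 0 := by
    by_contra hc
    push_neg at hc
    have hsub : Finset.univ.image u ⊆ Finset.univ.filter fun i : Fin p => 0 < x i := by
      intro a ha
      obtain ⟨t, -, rfl⟩ := Finset.mem_image.1 ha
      exact Finset.mem_filter.2 ⟨Finset.mem_univ _, by have := hc t; omega⟩
    have := Finset.card_le_card hsub
    rw [Finset.card_image_of_injective _ u.injective, Finset.card_univ, Fintype.card_fin] at this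
    omega
  obtain ⟨t, ht⟩ := this
  have : (fun i => if h : i < m then (x (u ⟨i, h⟩) : ℝ) else 0) ↑t = 0 := by
    beta_reduce
    rw [dif_pos t.isLt, show (⟨(t : ℕ), t.isLt⟩ : Fin m) = t from Fin.ext rfl, ht]
    norm_num
  rw [Qr_zero S _ m t.isLt this, zero_mul]

/-- Change of variables along an embedding: split coordinates into the image of `u`
and the rest. -/
lemma covP (p m : ℕ) (hmp : m ≤ p) (u : Fin m ↪ Fin p) :
    ∃ e : (Fin m → ℕ) × (Fin (p - m) → ℕ) ≃ (Fin p → ℕ),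
      (∀ k y t, e (k, y) (u t) = k t) ∧
      (∀ (k : Fin m → ℕ) (y : Fin (p - m) → ℕ) (g : ℕ → ℝ),
        ∏ i, g (e (k, y) i) = (∏ t, g (k t)) * (∏ j, g (y j))) ∧
      (∀ k y, ∑ i, e (k, y) i = (∑ t, k t) + (∑ j, y j)) := by
  classical
  set s : Finset (Fin p) := Finset.univ.image u with hs
  have hcards : s.card = m := by
    rw [hs, Finset.card_image_of_injective _ u.injective, Finset.card_univ, Fintype.card_fin]
  have hbij : Function.Bijective (fun t : Fin m => (⟨u t, by
      rw [hs]; exact Finset.mem_image.2 ⟨t, Finset.mem_univ t, rfl⟩⟩ : {a : Fin p // a ∈ s})) := by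
    rw [Fintype.bijective_iff_injective_and_card]
    constructor
    · intro t t' h
      exact u.injective (congrArg Subtype.val h)
    · rw [Fintype.card_coe, hcards, Fintype.card_fin]
  set e₁ : Fin m ≃ {a : Fin p // a ∈ s} := Equiv.ofBijective _ hbij with he₁
  have hcard2 : Fintype.card {a : Fin p // ¬ a ∈ s} = p - m := by
    rw [Fintype.card_subtype_compl, Fintype.card_fin, Fintype.card_coe, hcards]
  have e₂ : Fin (p - m) ≃ {a : Fin p // ¬ a ∈ s} :=
    (Fintype.equivFinOfCardEq hcard2).symm
  set ι : Fin m ⊕ Fin (p - m) ≃ Fin p :=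
    (Equiv.sumCongr e₁ e₂).trans (Equiv.sumCompl (· ∈ s)) with hι
  have hιl : ∀ t, ι (Sum.inl t) = u t := by
    intro t
    rw [hι]
    simp only [Equiv.trans_apply, Equiv.sumCongr_apply, Sum.map_inl, Equiv.sumCompl_apply_inl]
    rfl
  refine ⟨(Equiv.sumArrowEquivProdArrow (Fin m) (Fin (p - m)) ℕ).symm.trans
    (Equiv.arrowCongr ι (Equiv.refl ℕ)), ?_, ?_, ?_⟩
  · intro k y t
    show Sum.elim k y (ι.symm (u t)) = k t
    rw [← hιl t, Equiv.symm_apply_apply]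
    rfl
  · intro k y g
    have h1 : ∀ i : Fin p,
        g (((Equiv.sumArrowEquivProdArrow (Fin m) (Fin (p - m)) ℕ).symm.trans
          (Equiv.arrowCongr ι (Equiv.refl ℕ))) (k, y) i) = g (Sum.elim k y (ι.symm i)) :=
      fun i => rfl
    rw [Finset.prod_congr rfl fun i _ => h1 i]
    rw [← Equiv.prod_comp ι (fun i => g (Sum.elim k y (ι.symm i)))]
    rw [Finset.prod_congr rfl fun j _ => by rw [Equiv.symm_apply_apply]]
    rw [Fintype.prod_sum_type]
    rfl
  · intro k y
    have h1 : ∀ i : Fin p,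
        (((Equiv.sumArrowEquivProdArrow (Fin m) (Fin (p - m)) ℕ).symm.trans
          (Equiv.arrowCongr ι (Equiv.refl ℕ))) (k, y) i) = Sum.elim k y (ι.symm i) :=
      fun i => rfl
    rw [Finset.sum_congr rfl fun i _ => h1 i]
    rw [← Equiv.sum_comp ι (fun i => Sum.elim k y (ι.symm i))]
    rw [Finset.sum_congr rfl fun j _ => by rw [Equiv.symm_apply_apply]]
    rw [Fintype.sum_sum_type]
    rfl

end SB16






/-- **Measure change for the size-biased reordering of a partly fixed vector.**
Fix `n, r, s` with `r, s < n` and positive `d₁,…,d_r` summing to `s`.  Let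
`X_{r+1},…,Xₙ` be i.i.d. with law `μ` on ℕ (finite positive mean), put
`Z⃗ = (d₁,…,d_r, X_{r+1},…,Xₙ)`, and conditionally on `Z⃗` let `Σ` be the size-biased
random reordering permutation of `Z⃗` (law `(1/(n−N)!)·∏_{i≤N} z_{σ(i)}/∑_{j=i}^N z_{σ(j)}`
where `N` is the number of positive entries).  Let `N = |{i > r : Xᵢ > 0}|` and
`τ_r(Σ)` the first (1-indexed) position at which one of the `r` fixed entries
appears (`n+1` if `r = 0`).  Then for `m ∈ [n−r]` and any `f : ℕᵐ → ℝ`, provided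
`P(X_{r+1}+⋯+Xₙ = n−1−s) > 0`,
`E[f(Z_{Σ(1)},…,Z_{Σ(m)})·1{N ≥ m}·1{τ_r(Σ) > m} | X_{r+1}+⋯+Xₙ = n−1−s]
  = E[f(X̄₁,…,X̄ₘ)·Θ(X̄₁,…,X̄ₘ)]`
where the `X̄ᵢ` are i.i.d. size-biased samples from `μ` and `Θ` is the explicit
Radon–Nikodym factor.  All expectations are written as explicit (countable) sums. -/
theorem stmt16 (n r s : ℕ) (hr : r < n) (hs : s < n)
    (d : ℕ → ℕ) (hd : ∀ i < r, 1 ≤ d i) (hds : ∑ i ∈ Finset.range r, d i = s)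
    (μ : ℕ → ℝ) (hμ0 : ∀ k, 0 ≤ μ k) (hμ1 : ∑' k : ℕ, μ k = 1)
    (hsum : Summable (fun k : ℕ => (k : ℝ) * μ k))
    (hmean : 0 < ∑' k : ℕ, (k : ℝ) * μ k)
    (m : ℕ) (hm1 : 1 ≤ m) (hm2 : m ≤ n - r)
    (f : (Fin m → ℕ) → ℝ)
    (z : (Fin (n - r) → ℕ) → ℕ → ℕ)
    (hz : ∀ x i, z x i =
      if h : i < r then d i else if h' : i - r < n - r then x ⟨i - r, h'⟩ else 0)
    (hpos : 0 < ∑' x : Fin (n - r) → ℕ,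
        (∏ i, μ (x i)) * (if (∑ i, x i) = n - 1 - s then 1 else 0)) :
    (∑' x : Fin (n - r) → ℕ,
        (∏ i, μ (x i)) * (if (∑ i, x i) = n - 1 - s then 1 else 0) *
        (if m ≤ (Finset.univ.filter (fun i : Fin (n - r) => 0 < x i)).card then 1 else 0) *
        (∑ σ : Equiv.Perm (Fin n),
          (let Nz : ℕ := (Finset.univ.filter (fun i : Fin n => 0 < z x (i : ℕ))).card
           let σ' : ℕ → ℕ := fun i => if h : i < n then ((σ ⟨i, h⟩ : Fin n) : ℕ) else i
           (1 / ((n - Nz).factorial : ℝ)) *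
             (∏ i ∈ Finset.range Nz,
               (z x (σ' i) : ℝ) / (∑ j ∈ Finset.Ico i Nz, (z x (σ' j) : ℝ))) *
             (if m < (if r = 0 then n + 1 else sInf {j : ℕ | σ' j < r} + 1) then 1 else 0) *
             f (fun i => z x (σ' (i : ℕ))))))
      / (∑' x : Fin (n - r) → ℕ,
          (∏ i, μ (x i)) * (if (∑ i, x i) = n - 1 - s then 1 else 0))
    = ∑' k : Fin m → ℕ,
        (∏ i, ((k i : ℝ) * μ (k i) / (∑' k' : ℕ, (k' : ℝ) * μ k'))) * f k *
        (if (∑ i, k i) ≤ n - 1 - s then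
          ((∑' y : Fin (n - r - m) → ℕ,
              (∏ i, μ (y i)) * (if (∑ i, y i) = n - 1 - s - (∑ i, k i) then 1 else 0))
            / (∑' y : Fin (n - r) → ℕ,
              (∏ i, μ (y i)) * (if (∑ i, y i) = n - 1 - s then 1 else 0)))
          * (∑' k' : ℕ, (k' : ℝ) * μ k') ^ m *
          ∏ i ∈ Finset.range m,
            ((n : ℝ) - (r : ℝ) - (i : ℝ)) /
              ((n : ℝ) - 1 - ∑ j ∈ Finset.range i,
                (if h : j < m then (k ⟨j, h⟩ : ℝ) else 0))
        else 0) := by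
  classical
  have hrn : r ≤ n := le_of_lt hr
  have hmn : m ≤ n := by omega
  set T : ℕ := n - 1 - s with hTdef
  set c : ℝ := ∑' k' : ℕ, (k' : ℝ) * μ k' with hcdef
  set D : ℝ := ∑' x : Fin (n - r) → ℕ,
      (∏ i, μ (x i)) * (if (∑ i, x i) = T then 1 else 0) with hDdef
  have hc0 : 0 < c := hmean
  have hD0 : 0 < D := hpos
  have hTn : T < n := by omega
  -- basic facts about z
  have hzlow : ∀ (x : Fin (n - r) → ℕ) (i : ℕ), i < r → z x i = d i := by
    intro x i hi
    rw [hz, dif_pos hi]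
  have hzhigh : ∀ (x : Fin (n - r) → ℕ) (j : ℕ) (hj : j < n - r), z x (r + j) = x ⟨j, hj⟩ := by
    intro x j hj
    rw [hz, dif_neg (by omega), dif_pos (show r + j - r < n - r by omega)]
    exact congrArg x (Fin.ext (show r + j - r = j by omega))
  have hζ : ∀ (x : Fin (n - r) → ℕ) (a : Fin n) (h : r ≤ (a : ℕ)),
      (fun a : Fin n => z x (a : ℕ)) a = x ⟨(a : ℕ) - r, by have := a.isLt; omega⟩ := by
    intro x a h
    have ha := a.isLt
    have h2 : (a : ℕ) = r + ((a : ℕ) - r) := by omega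
    calc z x (a : ℕ) = z x (r + ((a : ℕ) - r)) := by rw [← h2]
      _ = x ⟨(a : ℕ) - r, by omega⟩ := hzhigh x _ (by omega)
  have hTotal : ∀ x : Fin (n - r) → ℕ, (∑ a : Fin n, z x (a : ℕ)) = s + ∑ t : Fin (n - r), x t := by
    intro x
    rw [Fin.sum_univ_eq_sum_range (fun i => z x i) n]
    rw [← Finset.sum_range_add_sum_Ico _ hrn]
    congr 1
    · rw [← hds]
      exact Finset.sum_congr rfl fun i hi => hzlow x i (Finset.mem_range.1 hi)
    · rw [Finset.sum_Ico_eq_sum_range]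
      rw [← SB16.sum_range_dite (n - r) (fun t => x t)]
      refine Finset.sum_congr rfl fun i hi => ?_
      have him := Finset.mem_range.1 hi
      rw [hzhigh x i him, dif_pos him]
  -- the pointwise rewrite of the integrand
  have hbody : ∀ x : Fin (n - r) → ℕ,
      (∏ i, μ (x i)) * (if (∑ i, x i) = T then 1 else 0) *
        (if m ≤ (Finset.univ.filter (fun i : Fin (n - r) => 0 < x i)).card then 1 else 0) *
        (∑ σ : Equiv.Perm (Fin n),
          (let Nz : ℕ := (Finset.univ.filter (fun i : Fin n => 0 < z x (i : ℕ))).card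
           let σ' : ℕ → ℕ := fun i => if h : i < n then ((σ ⟨i, h⟩ : Fin n) : ℕ) else i
           (1 / ((n - Nz).factorial : ℝ)) *
             (∏ i ∈ Finset.range Nz,
               (z x (σ' i) : ℝ) / (∑ j ∈ Finset.Ico i Nz, (z x (σ' j) : ℝ))) *
             (if m < (if r = 0 then n + 1 else sInf {j : ℕ | σ' j < r} + 1) then 1 else 0) *
             f (fun i => z x (σ' (i : ℕ)))))
      = (∏ i, μ (x i)) * (if (∑ i, x i) = T then 1 else 0) *
          (∑ u : Fin m ↪ Fin (n - r),
            SB16.Qr ((n : ℝ) - 1) (fun i => if h : i < m then (x (u ⟨i, h⟩) : ℝ) else 0) m *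
              f (fun t => x (u t))) := by
    intro x
    by_cases hT1 : (∑ i, x i) = T
    · rw [if_pos hT1]
      by_cases hNx : m ≤ (Finset.univ.filter (fun i : Fin (n - r) => 0 < x i)).card
      · rw [if_pos hNx]
        set Nz : ℕ := (Finset.univ.filter (fun i : Fin n => 0 < z x (i : ℕ))).card with hNzdef
        have hNzn : Nz ≤ n := by
          rw [hNzdef]
          calc (Finset.univ.filter (fun i : Fin n => 0 < z x (i : ℕ))).card
              ≤ Finset.univ.card := Finset.card_filter_le _ _
            _ = n := by rw [Finset.card_univ, Fintype.card_fin]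
        have hmNz : m ≤ Nz := by
          refine le_trans hNx ?_
          rw [hNzdef]
          refine Finset.card_le_card_of_injOn
            (fun i : Fin (n - r) => (⟨r + (i : ℕ), by have := i.isLt; omega⟩ : Fin n)) ?_ ?_
          · intro i hi
            rw [Finset.mem_coe, Finset.mem_filter] at hi ⊢
            refine ⟨Finset.mem_univ _, ?_⟩
            show 0 < z x (r + (i : ℕ))
            rw [hzhigh x (i : ℕ) i.isLt]
            rw [show (⟨(i : ℕ), i.isLt⟩ : Fin (n - r)) = i from Fin.ext rfl]
            exact hi.2
          · intro i _ j _ hij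
            rw [Fin.mk.injEq] at hij
            exact Fin.ext (by omega)
        have hScomp : ((n : ℝ) - 1) = ∑ a : Fin n, ((z x (a : ℕ) : ℕ) : ℝ) := by
          have h1 : (∑ a : Fin n, z x (a : ℕ)) = n - 1 := by
            rw [hTotal x]
            have := hT1
            omega
          rw [← Nat.cast_sum, h1, Nat.cast_sub (by omega : 1 ≤ n), Nat.cast_one]
        -- per-σ rewrite
        have hperσ : ∀ σ : Equiv.Perm (Fin n),
            (let Nz' : ℕ := (Finset.univ.filter (fun i : Fin n => 0 < z x (i : ℕ))).card
             let σ' : ℕ → ℕ := fun i => if h : i < n then ((σ ⟨i, h⟩ : Fin n) : ℕ) else i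
             (1 / ((n - Nz').factorial : ℝ)) *
               (∏ i ∈ Finset.range Nz',
                 (z x (σ' i) : ℝ) / (∑ j ∈ Finset.Ico i Nz', (z x (σ' j) : ℝ))) *
               (if m < (if r = 0 then n + 1 else sInf {j : ℕ | σ' j < r} + 1) then 1 else 0) *
               f (fun i => z x (σ' (i : ℕ))))
            = (1 / ((n - Nz).factorial : ℝ)) *
                SB16.Qr ((n : ℝ) - 1)
                  (fun i => if h : i < Nz then
                    ((z x ((σ (Fin.castLE hNzn ⟨i, h⟩) : Fin n) : ℕ) : ℕ) : ℝ) else 0) Nz *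
                ((if ∀ t : Fin m, r ≤ ((σ (Fin.castLE hmn t) : Fin n) : ℕ) then (1:ℝ) else 0) *
                  f (fun t => z x ((σ (Fin.castLE hmn t) : Fin n) : ℕ))) := by
          intro σ
          show (1 / ((n - Nz).factorial : ℝ)) *
               (∏ i ∈ Finset.range Nz,
                 (z x ((fun i => if h : i < n then ((σ ⟨i, h⟩ : Fin n) : ℕ) else i) i) : ℝ) /
                   (∑ j ∈ Finset.Ico i Nz,
                     (z x ((fun i => if h : i < n then ((σ ⟨i, h⟩ : Fin n) : ℕ) else i) j) : ℝ))) *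
               (if m < (if r = 0 then n + 1 else
                  sInf {j : ℕ | (fun i => if h : i < n then ((σ ⟨i, h⟩ : Fin n) : ℕ) else i) j < r}
                    + 1) then 1 else 0) *
               f (fun i : Fin m =>
                 z x ((fun i => if h : i < n then ((σ ⟨i, h⟩ : Fin n) : ℕ) else i) (i : ℕ)))
            = _
          have hwinj : Function.Injective
              (fun t : Fin Nz => σ (Fin.castLE hNzn t)) := by
            intro a b hab
            have h1 := σ.injective hab
            have h2 : ((Fin.castLE hNzn a : Fin n) : ℕ) = ((Fin.castLE hNzn b : Fin n) : ℕ) :=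
              congrArg Fin.val h1
            exact Fin.ext h2
          have hicoP := SB16.icoP n (fun a : Fin n => z x (a : ℕ)) Nz hNzdef
            ((n : ℝ) - 1) hScomp (fun t : Fin Nz => σ (Fin.castLE hNzn t)) hwinj
          have hprodeq : (∏ i ∈ Finset.range Nz,
              (z x ((fun i => if h : i < n then ((σ ⟨i, h⟩ : Fin n) : ℕ) else i) i) : ℝ) /
                (∑ j ∈ Finset.Ico i Nz,
                  (z x ((fun i => if h : i < n then ((σ ⟨i, h⟩ : Fin n) : ℕ) else i) j) : ℝ)))
            = ∏ i ∈ Finset.range Nz,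
              (if h : i < Nz then
                  ((z x ((σ (Fin.castLE hNzn ⟨i, h⟩) : Fin n) : ℕ) : ℕ) : ℝ) else 0) /
                (∑ j ∈ Finset.Ico i Nz,
                  (if h : j < Nz then
                    ((z x ((σ (Fin.castLE hNzn ⟨j, h⟩) : Fin n) : ℕ) : ℕ) : ℝ) else 0)) := by
            refine Finset.prod_congr rfl fun i hi => ?_
            have hiNz := Finset.mem_range.1 hi
            congr 1
            · beta_reduce
              rw [dif_pos (show i < n by omega), dif_pos hiNz]
              exact congrArg (fun a : Fin n => ((z x (a : ℕ) : ℕ) : ℝ))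
                (congrArg σ (Fin.ext rfl))
            · refine Finset.sum_congr rfl fun j hj => ?_
              have hjNz := (Finset.mem_Ico.1 hj).2
              beta_reduce
              rw [dif_pos (show j < n by omega), dif_pos hjNz]
              exact congrArg (fun a : Fin n => ((z x (a : ℕ) : ℕ) : ℝ))
                (congrArg σ (Fin.ext rfl))
          rw [hprodeq, hicoP]
          rw [SB16.tauP n r m hr hmn σ]
          have hfeq : f (fun i : Fin m =>
                z x ((fun i => if h : i < n then ((σ ⟨i, h⟩ : Fin n) : ℕ) else i) (i : ℕ)))
              = f (fun t => z x ((σ (Fin.castLE hmn t) : Fin n) : ℕ)) := by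
            apply congrArg
            funext t
            beta_reduce
            rw [dif_pos (show (t : ℕ) < n by have := t.isLt; omega)]
            exact congrArg (fun a : Fin n => z x (a : ℕ)) (congrArg σ (Fin.ext rfl))
          rw [hfeq]
          ring
        rw [Finset.sum_congr rfl fun σ _ => hperσ σ]
        have hclaim := SB16.claim n (fun a : Fin n => z x (a : ℕ)) Nz hNzdef hNzn
          ((n : ℝ) - 1) hScomp (Nz - m) m (by omega)
          (fun w : Fin m → Fin n =>
            (if ∀ t : Fin m, r ≤ ((w t : Fin n) : ℕ) then (1:ℝ) else 0) *
              f (fun t => z x ((w t : Fin n) : ℕ)))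
        rw [hclaim]
        have hrestr := SB16.restrictP n r m hrn hm2 (fun a : Fin n => z x (a : ℕ)) x
          (fun a h => hζ x a h) ((n : ℝ) - 1) f
        rw [hrestr]
        ring
      · rw [if_neg hNx]
        have h0 := SB16.absorbP (n - r) m x hNx ((n : ℝ) - 1) f
        rw [h0]
        ring
    · rw [if_neg hT1]
      ring
  -- notation for the per-embedding integrand
  set Φ : (Fin m ↪ Fin (n - r)) → (Fin (n - r) → ℕ) → ℝ := fun u x =>
    (∏ i, μ (x i)) * (if (∑ i, x i) = T then 1 else 0) *
      (SB16.Qr ((n : ℝ) - 1) (fun i => if h : i < m then (x (u ⟨i, h⟩) : ℝ) else 0) m *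
        f (fun t => x (u t))) with hΦdef
  have hsummand : ∀ u : Fin m ↪ Fin (n - r), Summable (Φ u) := by
    intro u
    apply summable_of_ne_finset_zero
      (s := Fintype.piFinset fun _ : Fin (n - r) => Finset.range n)
    intro x hx
    rw [Fintype.mem_piFinset] at hx
    push_neg at hx
    obtain ⟨i, hi⟩ := hx
    rw [Finset.mem_range] at hi
    push_neg at hi
    have hle : x i ≤ ∑ t, x t :=
      Finset.single_le_sum (fun t _ => Nat.zero_le (x t)) (Finset.mem_univ i)
    rw [hΦdef]
    beta_reduce
    rw [if_neg (show ¬ (∑ i, x i) = T by omega)]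
    ring
  set Θ : (Fin m → ℕ) → ℝ := fun k =>
    ((∏ t, μ (k t)) *
        (SB16.Qr ((n : ℝ) - 1) (fun i => if h : i < m then (k ⟨i, h⟩ : ℝ) else 0) m * f k)) *
      (if (∑ t, k t) ≤ T then
        (∑' y : Fin (n - r - m) → ℕ,
          (∏ j, μ (y j)) * (if (∑ j, y j) = T - (∑ t, k t) then 1 else 0))
      else 0) with hΘdef
  have hPeru : ∀ u : Fin m ↪ Fin (n - r), (∑' x : Fin (n - r) → ℕ, Φ u x) = ∑' k, Θ k := by
    intro u
    obtain ⟨e, he1, he2, he3⟩ := SB16.covP (n - r) m hm2 u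
    rw [← Equiv.tsum_eq e (Φ u)]
    have hΦe : ∀ (k : Fin m → ℕ) (y : Fin (n - r - m) → ℕ), Φ u (e (k, y)) =
        ((∏ t, μ (k t)) *
            (SB16.Qr ((n : ℝ) - 1) (fun i => if h : i < m then (k ⟨i, h⟩ : ℝ) else 0) m * f k)) *
          ((∏ j, μ (y j)) * (if (∑ t, k t) + (∑ j, y j) = T then 1 else 0)) := by
      intro k y
      rw [hΦdef]
      beta_reduce
      rw [he2 k y μ, he3 k y]
      have hQ : SB16.Qr ((n : ℝ) - 1)
            (fun i => if h : i < m then ((e (k, y)) (u ⟨i, h⟩) : ℝ) else 0) m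
          = SB16.Qr ((n : ℝ) - 1) (fun i => if h : i < m then (k ⟨i, h⟩ : ℝ) else 0) m := by
        refine SB16.Qr_congr fun i hi => ?_
        beta_reduce
        rw [dif_pos hi, dif_pos hi, he1 k y ⟨i, hi⟩]
      have hf : f (fun t => (e (k, y)) (u t)) = f k :=
        congrArg f (funext fun t => he1 k y t)
      rw [hQ, hf]
      ring
    have hsumm2 : Summable (fun q : (Fin m → ℕ) × (Fin (n - r - m) → ℕ) => Φ u (e q)) :=
      (Equiv.summable_iff e).2 (hsummand u)
    have hsumm3 : ∀ k : Fin m → ℕ, Summable (fun y : Fin (n - r - m) → ℕ => Φ u (e (k, y))) := by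
      intro k
      apply summable_of_ne_finset_zero
        (s := Fintype.piFinset fun _ : Fin (n - r - m) => Finset.range n)
      intro y hy
      rw [Fintype.mem_piFinset] at hy
      push_neg at hy
      obtain ⟨j, hj⟩ := hy
      rw [Finset.mem_range] at hj
      push_neg at hj
      have hle : y j ≤ ∑ t, y t :=
        Finset.single_le_sum (fun t _ => Nat.zero_le (y t)) (Finset.mem_univ j)
      rw [hΦe k y, if_neg (show ¬ (∑ t, k t) + (∑ j, y j) = T by omega)]
      ring
    rw [Summable.tsum_prod' hsumm2 hsumm3]
    refine tsum_congr fun k => ?_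
    rw [hΘdef]
    beta_reduce
    by_cases hkT : (∑ t, k t) ≤ T
    · rw [if_pos hkT]
      calc (∑' y : Fin (n - r - m) → ℕ, Φ u (e (k, y)))
          = ∑' y : Fin (n - r - m) → ℕ,
            ((∏ t, μ (k t)) *
                (SB16.Qr ((n : ℝ) - 1)
                  (fun i => if h : i < m then (k ⟨i, h⟩ : ℝ) else 0) m * f k)) *
              ((∏ j, μ (y j)) * (if (∑ j, y j) = T - (∑ t, k t) then 1 else 0)) := by
            refine tsum_congr fun y => ?_
            rw [hΦe k y]
            congr 2
            exact if_congr (by omega) rfl rfl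
        _ = _ := by rw [tsum_mul_left]
    · rw [if_neg hkT, mul_zero]
      calc (∑' y : Fin (n - r - m) → ℕ, Φ u (e (k, y)))
          = ∑' y : Fin (n - r - m) → ℕ, (0:ℝ) := by
            refine tsum_congr fun y => ?_
            rw [hΦe k y, if_neg (show ¬ (∑ t, k t) + (∑ j, y j) = T by omega)]
            ring
        _ = 0 := tsum_zero
  -- assemble the numerator
  have hNum : (∑' x : Fin (n - r) → ℕ,
      (∏ i, μ (x i)) * (if (∑ i, x i) = T then 1 else 0) *
        (if m ≤ (Finset.univ.filter (fun i : Fin (n - r) => 0 < x i)).card then 1 else 0) *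
        (∑ σ : Equiv.Perm (Fin n),
          (let Nz : ℕ := (Finset.univ.filter (fun i : Fin n => 0 < z x (i : ℕ))).card
           let σ' : ℕ → ℕ := fun i => if h : i < n then ((σ ⟨i, h⟩ : Fin n) : ℕ) else i
           (1 / ((n - Nz).factorial : ℝ)) *
             (∏ i ∈ Finset.range Nz,
               (z x (σ' i) : ℝ) / (∑ j ∈ Finset.Ico i Nz, (z x (σ' j) : ℝ))) *
             (if m < (if r = 0 then n + 1 else sInf {j : ℕ | σ' j < r} + 1) then 1 else 0) *
             f (fun i => z x (σ' (i : ℕ))))))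
      = (((n - r).descFactorial m : ℕ) : ℝ) * ∑' k, Θ k := by
    calc (∑' x : Fin (n - r) → ℕ, _)
        = ∑' x : Fin (n - r) → ℕ, ∑ u : Fin m ↪ Fin (n - r), Φ u x := by
          refine tsum_congr fun x => ?_
          rw [hbody x, Finset.mul_sum]
      _ = ∑ u : Fin m ↪ Fin (n - r), ∑' x : Fin (n - r) → ℕ, Φ u x :=
          Summable.tsum_finsetSum fun u _ => hsummand u
      _ = ∑ u : Fin m ↪ Fin (n - r), ∑' k, Θ k :=
          Finset.sum_congr rfl fun u _ => hPeru u
      _ = (((n - r).descFactorial m : ℕ) : ℝ) * ∑' k, Θ k := by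
          rw [Finset.sum_const, Finset.card_univ, Fintype.card_embedding_eq,
            Fintype.card_fin, Fintype.card_fin, nsmul_eq_mul]
  rw [hNum, ← tsum_mul_left, ← tsum_div_const]
  refine tsum_congr fun k => ?_
  rw [hΘdef]
  beta_reduce
  have hdesc : (((n - r).descFactorial m : ℕ) : ℝ) = ∏ i ∈ Finset.range m, ((n : ℝ) - r - i) := by
    rw [Nat.descFactorial_eq_prod_range, Nat.cast_prod]
    refine Finset.prod_congr rfl fun i hi => ?_
    have him := Finset.mem_range.1 hi
    rw [Nat.cast_sub (by omega : i ≤ n - r), Nat.cast_sub hrn]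
  by_cases hkT : (∑ t, k t) ≤ T
  · rw [if_pos hkT, if_pos hkT]
    have key : (∏ i ∈ Finset.range m, ((n : ℝ) - r - i)) * (∏ t, μ (k t)) *
          SB16.Qr ((n : ℝ) - 1) (fun i => if h : i < m then (k ⟨i, h⟩ : ℝ) else 0) m
        = (∏ i, ((k i : ℝ) * μ (k i) / c)) * c ^ m *
          ∏ i ∈ Finset.range m,
            ((n : ℝ) - (r : ℝ) - (i : ℝ)) /
              ((n : ℝ) - 1 - ∑ j ∈ Finset.range i,
                (if h : j < m then (k ⟨j, h⟩ : ℝ) else 0)) := by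
      rw [show (∏ t, μ (k t))
          = ∏ i ∈ Finset.range m, (if h : i < m then μ (k ⟨i, h⟩) else 1) from
        (SB16.prod_range_dite m fun t => μ (k t)).symm]
      rw [show (∏ i, ((k i : ℝ) * μ (k i) / c))
          = ∏ i ∈ Finset.range m, (if h : i < m then ((k ⟨i, h⟩ : ℝ) * μ (k ⟨i, h⟩) / c) else 1) from
        (SB16.prod_range_dite m fun t => ((k t : ℝ) * μ (k t) / c)).symm]
      rw [show (c : ℝ) ^ m = ∏ _i ∈ Finset.range m, c by
        rw [Finset.prod_const, Finset.card_range]]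
      unfold SB16.Qr
      rw [← Finset.prod_mul_distrib, ← Finset.prod_mul_distrib, ← Finset.prod_mul_distrib,
        ← Finset.prod_mul_distrib]
      refine Finset.prod_congr rfl fun i hi => ?_
      have him := Finset.mem_range.1 hi
      beta_reduce
      rw [dif_pos him, dif_pos him, dif_pos him]
      rw [div_mul_cancel₀ _ (ne_of_gt hc0)]
      rw [div_eq_mul_inv, div_eq_mul_inv]
      ring
    rw [hdesc]
    linear_combination (f k *
      (∑' y : Fin (n - r - m) → ℕ,
        (∏ j, μ (y j)) * (if (∑ j, y j) = T - (∑ t, k t) then 1 else 0)) / D) * key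
  · rw [if_neg hkT, if_neg hkT]
    ring
end
end
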